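/- arXiv:2211.10080 — 6 statements merged into one kernel-verified Lean document; each statement's English description precedes it below -/
import Mathlib

section
/- Let A be symmetric positive definite with positive diagonal, D its diagonal part, and G = I − M⁻¹A for an invertible M. Then the smoothing inequality ‖Ge‖_A² ≤ ‖e‖_A² − α (D⁻¹Ae, Ae) holds for all e if and only if α Mᵀ D⁻¹ M ⪯ M + Mᵀ − A (Loewner order). -/
open Matrix

/-- for SPD `A` with positive diagonal `D` and invertible `M`,
with `G = I − M⁻¹A`, the smoothing inequality
`‖Ge‖_A² ≤ ‖e‖_A² − α (D⁻¹Ae, Ae)` holds for all `e` iff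
`α MᵀD⁻¹M ⪯ M + Mᵀ − A` in the Loewner order. -/
theorem smoothing_property_iff_loewner {n : ℕ} (A M : Matrix (Fin n) (Fin n) ℝ)
    (hA : A.PosDef) (hdiag : ∀ i, 0 < A i i) (hM : IsUnit M) (α : ℝ) :
    (∀ e : Fin n → ℝ,
        ((1 - M⁻¹ * A).mulVec e) ⬝ᵥ A.mulVec ((1 - M⁻¹ * A).mulVec e) ≤
          e ⬝ᵥ A.mulVec e -
            α * (((Matrix.diagonal fun i => A i i)⁻¹.mulVec (A.mulVec e)) ⬝ᵥ A.mulVec e)) ↔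
      (M + Mᵀ - A - α • (Mᵀ * (Matrix.diagonal fun i => A i i)⁻¹ * M)).PosSemidef := by
  set D : Matrix (Fin n) (Fin n) ℝ := Matrix.diagonal fun i => A i i with hD
  set B : Matrix (Fin n) (Fin n) ℝ := M + Mᵀ - A - α • (Mᵀ * D⁻¹ * M) with hB
  have hAs : Aᵀ = A := hA.1.eq
  have hMdet : IsUnit M.det := (Matrix.isUnit_iff_isUnit_det M).mp hM
  have hAdet : IsUnit A.det := (Matrix.isUnit_iff_isUnit_det A).mp hA.isUnit
  have hMM : M * M⁻¹ = 1 := Matrix.mul_nonsing_inv M hMdet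
  have hMM' : M⁻¹ * M = 1 := Matrix.nonsing_inv_mul M hMdet
  have hAA : A * A⁻¹ = 1 := Matrix.mul_nonsing_inv A hAdet
  have hDs : D⁻¹ᵀ = D⁻¹ := by
    rw [Matrix.transpose_nonsing_inv, hD, Matrix.diagonal_transpose]
  have symapp : ∀ (C : Matrix (Fin n) (Fin n) ℝ), Cᵀ = C → ∀ v : Fin n → ℝ,
      v ᵥ* C = C *ᵥ v := by
    intro C hC v
    conv_lhs => rw [← hC]
    rw [Matrix.vecMul_transpose]
  -- B is symmetric
  have hBherm : B.IsHermitian := by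
    have : Bᵀ = B := by
      rw [hB]
      simp only [Matrix.transpose_sub, Matrix.transpose_add, Matrix.transpose_smul,
        Matrix.transpose_mul, Matrix.transpose_transpose, hAs, hDs]
      rw [← Matrix.mul_assoc, add_comm Mᵀ M]
    simpa [Matrix.IsHermitian] using this
  -- key identity
  have key : ∀ e : Fin n → ℝ,
      e ⬝ᵥ A.mulVec e - α * ((D⁻¹.mulVec (A.mulVec e)) ⬝ᵥ A.mulVec e)
        - ((1 - M⁻¹ * A).mulVec e) ⬝ᵥ A.mulVec ((1 - M⁻¹ * A).mulVec e)
        = ((M⁻¹ * A).mulVec e) ⬝ᵥ B.mulVec ((M⁻¹ * A).mulVec e) := by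
    intro e
    set f : Fin n → ℝ := (M⁻¹ * A).mulVec e with hf
    have hAe : A.mulVec e = M.mulVec f := by
      rw [hf, Matrix.mulVec_mulVec, ← Matrix.mul_assoc, hMM, Matrix.one_mul]
    have h1 : e ⬝ᵥ A.mulVec f = f ⬝ᵥ Mᵀ.mulVec f := by
      rw [Matrix.dotProduct_mulVec e A f, symapp A hAs, hAe,
        Matrix.dotProduct_mulVec f Mᵀ f, Matrix.vecMul_transpose]
    have h2 : f ⬝ᵥ A.mulVec e = f ⬝ᵥ M.mulVec f := by rw [hAe]
    have h3 : (D⁻¹.mulVec (A.mulVec e)) ⬝ᵥ A.mulVec e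
        = f ⬝ᵥ (Mᵀ * D⁻¹ * M).mulVec f := by
      rw [hAe, ← Matrix.mulVec_mulVec f (Mᵀ * D⁻¹) M, ← Matrix.mulVec_mulVec _ Mᵀ D⁻¹,
        Matrix.dotProduct_mulVec f Mᵀ, Matrix.vecMul_transpose, dotProduct_comm]
    have hG : (1 - M⁻¹ * A).mulVec e = e - f := by
      rw [Matrix.sub_mulVec, Matrix.one_mulVec, hf]
    rw [hG, hB]
    simp only [Matrix.sub_mulVec, Matrix.add_mulVec, Matrix.smul_mulVec,
      Matrix.mulVec_sub, dotProduct_sub, sub_dotProduct,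
      dotProduct_add, dotProduct_smul, smul_eq_mul]
    rw [h1, h2, h3] at *
    ring
  constructor
  · intro h
    refine Matrix.PosSemidef.of_dotProduct_mulVec_nonneg hBherm ?_
    intro x
    have hsurj : ∃ e, (M⁻¹ * A).mulVec e = x := by
      refine ⟨A⁻¹.mulVec (M.mulVec x), ?_⟩
      rw [Matrix.mulVec_mulVec, Matrix.mulVec_mulVec, Matrix.mul_assoc M⁻¹ A A⁻¹, hAA,
        Matrix.mul_one, hMM', Matrix.one_mulVec]
    obtain ⟨e, he⟩ := hsurj
    have hk := key e
    rw [he] at hk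
    have h2 := h e
    simp only [star_trivial]
    linarith
  · intro h e
    have hk := key e
    have h2 := h.dotProduct_mulVec_nonneg ((M⁻¹ * A).mulVec e)
    simp only [star_trivial] at h2
    linarith
end

section
/- Let H₂ be the 3n×3n matrix [[D_r⁻¹A_r, 0, 0],[0, D_i⁻¹A_i, 0],[D_e⁻¹D_er, D_e⁻¹D_ei, D_e⁻¹A_e]] built from the 3T system, where D_r, D_i, D_e are the diagonal parts of A_r, A_i, A_e. If the full matrix A is strictly diagonally dominant, then ‖H₂‖_∞ ≤ 2. -/
open Matrix Finset

lemma diag_inv {n : ℕ} {d : Fin n → ℝ} (h : ∀ k, d k ≠ 0) :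
    (Matrix.diagonal d)⁻¹ = Matrix.diagonal (fun k => (d k)⁻¹) := by
  apply Matrix.inv_eq_right_inv
  rw [Matrix.diagonal_mul_diagonal]
  convert Matrix.diagonal_one using 2
  exact funext fun k => mul_inv_cancel₀ (h k)

lemma final_aux (a s t : ℝ) (ha : 0 < a) (hts : t ≤ s) (hs : s < 2 * a) : a⁻¹ * t ≤ 2 := by
  rw [inv_mul_le_iff₀ ha]
  nlinarith

lemma split_dd {m : Type*} [Fintype m] [DecidableEq m] (f : m → ℝ) (k : m) :
    ∑ j, |f j| = |f k| + ∑ j ∈ Finset.univ \ {k}, |f j| := by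
  rw [← Finset.sum_sdiff (Finset.subset_univ {k}), Finset.sum_singleton]; ring

/-- for the 3T system, the matrix
`H₂ = [[Dr⁻¹Ar,0,0],[0,Di⁻¹Ai,0],[De⁻¹Der, De⁻¹Dei, De⁻¹Ae]]` (with `Dr, Di, De`
the diagonal parts of `Ar, Ai, Ae`) satisfies `‖H₂‖_∞ ≤ 2` whenever the full
matrix `A` is strictly diagonally dominant (with positive diagonal). -/
theorem H2_inf_norm_le_two {n : ℕ}
    (Ar Ai Ae : Matrix (Fin n) (Fin n) ℝ) (dr di : Fin n → ℝ)
    (A : Matrix ((Fin n ⊕ Fin n) ⊕ Fin n) ((Fin n ⊕ Fin n) ⊕ Fin n) ℝ)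
    (hAdef : A = Matrix.fromBlocks (Matrix.fromBlocks Ar 0 0 Ai)
      (Matrix.fromRows (Matrix.diagonal dr)ᵀ (Matrix.diagonal di)ᵀ)
      (Matrix.fromCols (Matrix.diagonal dr) (Matrix.diagonal di)) Ae)
    (hpos : ∀ k, 0 < A k k)
    (hdd : ∀ k, ∑ j ∈ Finset.univ \ {k}, |A k j| < A k k)
    (H₂ : Matrix ((Fin n ⊕ Fin n) ⊕ Fin n) ((Fin n ⊕ Fin n) ⊕ Fin n) ℝ)
    (hH₂ : H₂ = Matrix.fromBlocks
      (Matrix.fromBlocks ((Matrix.diagonal fun k => Ar k k)⁻¹ * Ar) 0 0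
        ((Matrix.diagonal fun k => Ai k k)⁻¹ * Ai)) 0
      (Matrix.fromCols ((Matrix.diagonal fun k => Ae k k)⁻¹ * Matrix.diagonal dr)
        ((Matrix.diagonal fun k => Ae k k)⁻¹ * Matrix.diagonal di))
      ((Matrix.diagonal fun k => Ae k k)⁻¹ * Ae)) :
    ∀ k, ∑ j, |H₂ k j| ≤ 2 := by
  have hr : ∀ k, 0 < Ar k k := fun k => by simpa [hAdef] using hpos (Sum.inl (Sum.inl k))
  have hi : ∀ k, 0 < Ai k k := fun k => by simpa [hAdef] using hpos (Sum.inl (Sum.inr k))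
  have he : ∀ k, 0 < Ae k k := fun k => by simpa [hAdef] using hpos (Sum.inr k)
  have hdd2 : ∀ k, ∑ j, |A k j| < 2 * A k k := by
    intro k
    have h1 := hdd k
    rw [split_dd (A k) k, abs_of_pos (hpos k)]
    linarith
  subst hH₂
  rintro ((k | k) | k)
  · have h1 : ∑ j, |(Matrix.fromBlocks
        (Matrix.fromBlocks ((Matrix.diagonal fun k => Ar k k)⁻¹ * Ar) 0 0
          ((Matrix.diagonal fun k => Ai k k)⁻¹ * Ai)) 0
        (Matrix.fromCols ((Matrix.diagonal fun k => Ae k k)⁻¹ * Matrix.diagonal dr)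
          ((Matrix.diagonal fun k => Ae k k)⁻¹ * Matrix.diagonal di))
        ((Matrix.diagonal fun k => Ae k k)⁻¹ * Ae)) (Sum.inl (Sum.inl k)) j|
        = (Ar k k)⁻¹ * ∑ j, |Ar k j| := by
      rw [Fintype.sum_sum_type, Fintype.sum_sum_type, Finset.mul_sum]
      simp [diag_inv (fun j => (hr j).ne'), Matrix.diagonal_mul, abs_mul,
        abs_of_pos (inv_pos.mpr (hr k))]
    have h2 : ∑ j, |A (Sum.inl (Sum.inl k)) j|
        = ∑ j, |Ar k j| + ∑ j : Fin n, |Matrix.diagonal dr k j| := by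
      rw [Fintype.sum_sum_type, Fintype.sum_sum_type]
      simp [hAdef]
    rw [h1]
    refine final_aux _ (∑ j, |A (Sum.inl (Sum.inl k)) j|) _ (hr k) ?_ ?_
    · rw [h2]
      exact le_add_of_nonneg_right (by positivity)
    · have := hdd2 (Sum.inl (Sum.inl k))
      simpa [hAdef] using this
  · have h1 : ∑ j, |(Matrix.fromBlocks
        (Matrix.fromBlocks ((Matrix.diagonal fun k => Ar k k)⁻¹ * Ar) 0 0
          ((Matrix.diagonal fun k => Ai k k)⁻¹ * Ai)) 0
        (Matrix.fromCols ((Matrix.diagonal fun k => Ae k k)⁻¹ * Matrix.diagonal dr)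
          ((Matrix.diagonal fun k => Ae k k)⁻¹ * Matrix.diagonal di))
        ((Matrix.diagonal fun k => Ae k k)⁻¹ * Ae)) (Sum.inl (Sum.inr k)) j|
        = (Ai k k)⁻¹ * ∑ j, |Ai k j| := by
      rw [Fintype.sum_sum_type, Fintype.sum_sum_type, Finset.mul_sum]
      simp [diag_inv (fun j => (hi j).ne'), Matrix.diagonal_mul, abs_mul,
        abs_of_pos (inv_pos.mpr (hi k))]
    have h2 : ∑ j, |A (Sum.inl (Sum.inr k)) j|
        = ∑ j, |Ai k j| + ∑ j : Fin n, |Matrix.diagonal di k j| := by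
      rw [Fintype.sum_sum_type, Fintype.sum_sum_type]
      simp [hAdef, add_comm]
    rw [h1]
    refine final_aux _ (∑ j, |A (Sum.inl (Sum.inr k)) j|) _ (hi k) ?_ ?_
    · rw [h2]
      exact le_add_of_nonneg_right (by positivity)
    · have := hdd2 (Sum.inl (Sum.inr k))
      simpa [hAdef] using this
  · have h1 : ∑ j, |(Matrix.fromBlocks
        (Matrix.fromBlocks ((Matrix.diagonal fun k => Ar k k)⁻¹ * Ar) 0 0
          ((Matrix.diagonal fun k => Ai k k)⁻¹ * Ai)) 0
        (Matrix.fromCols ((Matrix.diagonal fun k => Ae k k)⁻¹ * Matrix.diagonal dr)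
          ((Matrix.diagonal fun k => Ae k k)⁻¹ * Matrix.diagonal di))
        ((Matrix.diagonal fun k => Ae k k)⁻¹ * Ae)) (Sum.inr k) j|
        = (Ae k k)⁻¹ * ∑ j, |A (Sum.inr k) j| := by
      rw [Fintype.sum_sum_type, Fintype.sum_sum_type, Fintype.sum_sum_type,
        Fintype.sum_sum_type, mul_add, mul_add,
        Finset.mul_sum, Finset.mul_sum, Finset.mul_sum]
      simp [hAdef, diag_inv (fun j => (he j).ne'), Matrix.diagonal_mul, abs_mul,
        abs_of_pos (inv_pos.mpr (he k)), Matrix.diagonal_apply, apply_ite abs,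
        mul_ite, mul_zero, Finset.sum_ite_eq]
    rw [h1]
    refine final_aux _ (∑ j, |A (Sum.inr k) j|) _ (he k) le_rfl ?_
    have := hdd2 (Sum.inr k)
    simpa [hAdef] using this
end

section
/- Let A_r be an n×n M-matrix and D_er = diag(d_1,…,d_n) with d_j ≤ 0, such that the augmented rows satisfy Σ_j a_{kj} + d_k > 0 (strict diagonal dominance of the 3T matrix). Then every row of the matrix H₁ = [[I, 0, A_r⁻¹D_erᵀ],[0, I, A_i⁻¹D_eiᵀ],[0, 0, I]] has absolute row sum at most 2, i.e., ‖H₁‖_∞ ≤ 2, where A_i, D_ei satisfy the analogous hypotheses. -/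
open Matrix Finset

lemma key_row {n : ℕ} (A : Matrix (Fin n) (Fin n) ℝ) (d : Fin n → ℝ)
    (hinv : ∀ k j, 0 ≤ A⁻¹ k j) (hU : IsUnit A) (hd : ∀ k, d k ≤ 0)
    (hs : ∀ k, 0 < (∑ j, A k j) + d k) (a : Fin n) :
    ∑ j, |(A⁻¹ * (Matrix.diagonal d)ᵀ) a j| ≤ 1 := by
  have hAA : A⁻¹ * A = 1 := nonsing_inv_mul A ((Matrix.isUnit_iff_isUnit_det A).mp hU)
  have habs : ∀ j, |(A⁻¹ * (Matrix.diagonal d)ᵀ) a j| = A⁻¹ a j * (-d j) := by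
    intro j
    rw [diagonal_transpose, mul_diagonal]
    rw [abs_mul, abs_of_nonneg (hinv a j), abs_of_nonpos (hd j)]
  calc ∑ j, |(A⁻¹ * (Matrix.diagonal d)ᵀ) a j|
      = ∑ j, A⁻¹ a j * (-d j) := by simp_rw [habs]
    _ ≤ ∑ j, A⁻¹ a j * (∑ l, A j l) := by
        apply Finset.sum_le_sum
        intro j _
        exact mul_le_mul_of_nonneg_left (by linarith [hs j]) (hinv a j)
    _ = ∑ l, (A⁻¹ * A) a l := by
        simp_rw [Finset.mul_sum, Matrix.mul_apply]
        rw [Finset.sum_comm]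
    _ = 1 := by rw [hAA]; simp [Matrix.one_apply, Finset.sum_ite_eq']

/-- for M-matrices `Ar, Ai` with nonnegative inverses and diagonal
coupling matrices `Der = diagonal dr`, `Dei = diagonal di` with nonpositive
entries, if the augmented rows satisfy `Σ_j Ar k j + dr k > 0` and
`Σ_j Ai k j + di k > 0`, then every row of
`H₁ = [[I, 0, Ar⁻¹Derᵀ],[0, I, Ai⁻¹Deiᵀ],[0,0,I]]` has absolute row sum at most
`2`, i.e. `‖H₁‖_∞ ≤ 2`. -/
theorem H1_inf_norm_le_two {n : ℕ}
    (Ar Ai : Matrix (Fin n) (Fin n) ℝ) (dr di : Fin n → ℝ)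
    (hArM : (∀ k, 0 < Ar k k) ∧ (∀ k j, k ≠ j → Ar k j ≤ 0) ∧ ∀ k j, 0 ≤ Ar⁻¹ k j)
    (hAiM : (∀ k, 0 < Ai k k) ∧ (∀ k j, k ≠ j → Ai k j ≤ 0) ∧ ∀ k j, 0 ≤ Ai⁻¹ k j)
    (hArU : IsUnit Ar) (hAiU : IsUnit Ai)
    (hdr : ∀ k, dr k ≤ 0) (hdi : ∀ k, di k ≤ 0)
    (hsr : ∀ k, 0 < (∑ j, Ar k j) + dr k)
    (hsi : ∀ k, 0 < (∑ j, Ai k j) + di k)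
    (H₁ : Matrix ((Fin n ⊕ Fin n) ⊕ Fin n) ((Fin n ⊕ Fin n) ⊕ Fin n) ℝ)
    (hH₁ : H₁ = Matrix.fromBlocks (Matrix.fromBlocks 1 0 0 1)
      (Matrix.fromRows (Ar⁻¹ * (Matrix.diagonal dr)ᵀ) (Ai⁻¹ * (Matrix.diagonal di)ᵀ)) 0 1) :
    ∀ k, ∑ j, |H₁ k j| ≤ 2 := by
  subst hH₁
  intro k
  rcases k with (a | a) | a
  · have h2 := key_row Ar dr hArM.2.2 hArU hdr hsr a
    simp only [Fintype.sum_sum_type, fromBlocks_apply₁₁, fromBlocks_apply₁₂, fromBlocks_apply₂₁, fromBlocks_apply₂₂,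
      fromRows_apply_inl]
    have h1 : ∑ x : Fin n, |(1 : Matrix (Fin n) (Fin n) ℝ) a x| = 1 := by
      simp [Matrix.one_apply, apply_ite, Finset.sum_ite_eq']
    have h0 : ∑ x : Fin n, |(0 : Matrix (Fin n) (Fin n) ℝ) a x| = 0 := by simp
    linarith
  · have h2 := key_row Ai di hAiM.2.2 hAiU hdi hsi a
    simp only [Fintype.sum_sum_type, fromBlocks_apply₁₁, fromBlocks_apply₁₂, fromBlocks_apply₂₁, fromBlocks_apply₂₂,
      fromRows_apply_inr]
    have h1 : ∑ x : Fin n, |(1 : Matrix (Fin n) (Fin n) ℝ) a x| = 1 := by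
      simp [Matrix.one_apply, apply_ite, Finset.sum_ite_eq']
    have h0 : ∑ x : Fin n, |(0 : Matrix (Fin n) (Fin n) ℝ) a x| = 0 := by simp
    linarith
  · simp only [Fintype.sum_sum_type, fromBlocks_apply₂₁, fromBlocks_apply₂₂,
      Matrix.zero_apply, abs_zero, Finset.sum_const_zero]
    simp [Matrix.one_apply, apply_ite, Finset.sum_ite_eq']
end

section
/- For the PCTL smoother of the 3T system, the matrix H := (M + Mᵀ − A)⁻¹ MᵀD⁻¹M factors as H = H₁H₂ and satisfies λ_max(H) ≤ ‖H₁‖_∞ ‖H₂‖_∞ ≤ 4; consequently the post-smoothing operator G₂ = I − M⁻¹A satisfies ‖G₂e‖_A² ≤ ‖e‖_A² − (1/4)(D⁻¹Ae, Ae) for all e. -/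
open Matrix Finset

variable {m : Type*} [Fintype m] [DecidableEq m]

/-- expansion of the quadratic form -/
lemma pctl_quad_expand (B : Matrix m m ℝ) (v : m → ℝ) :
    v ⬝ᵥ B.mulVec v = ∑ k, ∑ j, B k j * (v k * v j) := by
  simp only [dotProduct, Matrix.mulVec, dotProduct, Finset.mul_sum]
  exact Finset.sum_congr rfl fun k _ => Finset.sum_congr rfl fun j _ => by ring

lemma pctl_dot_comm (B : Matrix m m ℝ) (hsym : ∀ k j, B k j = B j k) (a b : m → ℝ) :
    a ⬝ᵥ B.mulVec b = b ⬝ᵥ B.mulVec a := by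
  simp only [dotProduct, Matrix.mulVec, dotProduct, Finset.mul_sum]
  rw [Finset.sum_comm]
  exact Finset.sum_congr rfl fun k _ => Finset.sum_congr rfl fun j _ => by rw [hsym j k]; ring

/-- splitting off the diagonal term -/
lemma pctl_split_diag (g : m → ℝ) (k : m) :
    ∑ j, g j = g k + ∑ j, (if j = k then 0 else g j) := by
  have : ∀ j, g j = (if j = k then g j else 0) + (if j = k then 0 else g j) := by
    intro j; split <;> ring
  rw [Finset.sum_congr rfl fun j _ => this j, Finset.sum_add_distrib, Finset.sum_ite_eq'
    Finset.univ k g]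
  simp

/-- swap lemma for symmetric matrices -/
lemma pctl_swap (B : Matrix m m ℝ) (hsym : ∀ k j, B k j = B j k) (v : m → ℝ) :
    ∑ k, ∑ j, (if j = k then 0 else |B k j|) * v j ^ 2
      = ∑ k, (∑ j, (if j = k then 0 else |B k j|)) * v k ^ 2 := by
  rw [Finset.sum_comm]
  refine Finset.sum_congr rfl fun j _ => ?_
  rw [Finset.sum_mul]
  refine Finset.sum_congr rfl fun k _ => ?_
  rw [hsym k j]
  by_cases h : j = k
  · subst h; simp
  · rw [if_neg h, if_neg fun hh => h hh.symm]

/-- bound on quadratic form minus diagonal part -/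
lemma pctl_quad_diag_bound (B : Matrix m m ℝ) (hsym : ∀ k j, B k j = B j k) (v : m → ℝ) :
    |v ⬝ᵥ B.mulVec v - ∑ k, B k k * v k ^ 2|
      ≤ ∑ k, (∑ j, (if j = k then 0 else |B k j|)) * v k ^ 2 := by
  have hexp : v ⬝ᵥ B.mulVec v - ∑ k, B k k * v k ^ 2
      = ∑ k, ∑ j, (if j = k then 0 else B k j * (v k * v j)) := by
    rw [pctl_quad_expand, ← Finset.sum_sub_distrib]
    refine Finset.sum_congr rfl fun k _ => ?_
    rw [pctl_split_diag (fun j => B k j * (v k * v j)) k]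
    ring
  rw [hexp]
  calc |∑ k, ∑ j, (if j = k then 0 else B k j * (v k * v j))|
      ≤ ∑ k, |∑ j, (if j = k then 0 else B k j * (v k * v j))| := Finset.abs_sum_le_sum_abs _ _
    _ ≤ ∑ k, ∑ j, |if j = k then 0 else B k j * (v k * v j)| := by
        exact Finset.sum_le_sum fun k _ => Finset.abs_sum_le_sum_abs _ _
    _ ≤ ∑ k, ∑ j, (if j = k then 0 else |B k j| * (v k ^ 2 + v j ^ 2) / 2) := by
        refine Finset.sum_le_sum fun k _ => Finset.sum_le_sum fun j _ => ?_
        by_cases h : j = k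
        · simp [h]
        · rw [if_neg h, if_neg h, abs_mul, abs_mul]
          have h1 : |v k| * |v j| ≤ (v k ^ 2 + v j ^ 2) / 2 := by
            nlinarith [sq_nonneg (|v k| - |v j|), sq_abs (v k), sq_abs (v j)]
          have h2 : (0:ℝ) ≤ |B k j| := abs_nonneg _
          calc |B k j| * (|v k| * |v j|) ≤ |B k j| * ((v k ^ 2 + v j ^ 2) / 2) :=
                mul_le_mul_of_nonneg_left h1 h2
            _ = |B k j| * (v k ^ 2 + v j ^ 2) / 2 := by ring
    _ = (∑ k, ∑ j, (if j = k then 0 else |B k j|) * v k ^ 2) / 2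
        + (∑ k, ∑ j, (if j = k then 0 else |B k j|) * v j ^ 2) / 2 := by
        have hpt : ∀ k j : m, (if j = k then 0 else |B k j| * (v k ^ 2 + v j ^ 2) / 2)
            = ((if j = k then 0 else |B k j|) * v k ^ 2) / 2
              + ((if j = k then 0 else |B k j|) * v j ^ 2) / 2 := by
          intro k j; split <;> ring
        simp only [hpt, Finset.sum_add_distrib, ← Finset.sum_div]
    _ ≤ _ := by
        have h1 : ∑ k, ∑ j, (if j = k then 0 else |B k j|) * v k ^ 2
            = ∑ k, (∑ j, (if j = k then 0 else |B k j|)) * v k ^ 2 :=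
          Finset.sum_congr rfl fun k _ => (Finset.sum_mul _ _ _).symm
        rw [pctl_swap B hsym v, h1]
        linarith


/-- upper bound: quadratic form by twice the diagonal -/
lemma pctl_quad_upper (B : Matrix m m ℝ) (hsym : ∀ k j, B k j = B j k)
    (hdom : ∀ k, ∑ j, (if j = k then 0 else |B k j|) ≤ B k k) (v : m → ℝ) :
    v ⬝ᵥ B.mulVec v ≤ 2 * ∑ k, B k k * v k ^ 2 := by
  have h := (abs_le.mp (pctl_quad_diag_bound B hsym v)).2
  have h2 : ∑ k, (∑ j, (if j = k then 0 else |B k j|)) * v k ^ 2 ≤ ∑ k, B k k * v k ^ 2 :=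
    Finset.sum_le_sum fun k _ => mul_le_mul_of_nonneg_right (hdom k) (sq_nonneg _)
  linarith

/-- lower bound: quadratic form below by diagonal gaps -/
lemma pctl_quad_lower (B : Matrix m m ℝ) (hsym : ∀ k j, B k j = B j k) (v : m → ℝ) :
    ∑ k, (B k k - ∑ j, (if j = k then 0 else |B k j|)) * v k ^ 2 ≤ v ⬝ᵥ B.mulVec v := by
  have h := (abs_le.mp (pctl_quad_diag_bound B hsym v)).1
  have he : ∑ k, (B k k - ∑ j, (if j = k then 0 else |B k j|)) * v k ^ 2
      = ∑ k, B k k * v k ^ 2 - ∑ k, (∑ j, (if j = k then 0 else |B k j|)) * v k ^ 2 := by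
    rw [← Finset.sum_sub_distrib]; exact Finset.sum_congr rfl fun k _ => by ring
  linarith

/-- Cauchy–Schwarz for a PSD bilinear form -/
lemma pctl_CS (B : Matrix m m ℝ) (hsym : ∀ k j, B k j = B j k)
    (hpsd : ∀ v : m → ℝ, 0 ≤ v ⬝ᵥ B.mulVec v) (a b : m → ℝ) :
    (a ⬝ᵥ B.mulVec b) ^ 2 ≤ (a ⬝ᵥ B.mulVec a) * (b ⬝ᵥ B.mulVec b) := by
  have key : ∀ t : ℝ, 0 ≤ (b ⬝ᵥ B.mulVec b) * (t * t) + (2 * (a ⬝ᵥ B.mulVec b)) * t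
      + (a ⬝ᵥ B.mulVec a) := by
    intro t
    have h := hpsd (a + t • b)
    have hexp : (a + t • b) ⬝ᵥ B.mulVec (a + t • b)
        = (b ⬝ᵥ B.mulVec b) * (t * t) + (2 * (a ⬝ᵥ B.mulVec b)) * t + (a ⬝ᵥ B.mulVec a) := by
      rw [Matrix.mulVec_add, Matrix.mulVec_smul, dotProduct_add, add_dotProduct,
        add_dotProduct, dotProduct_smul, smul_dotProduct, smul_dotProduct,
        pctl_dot_comm B hsym b a]
      simp only [Matrix.smul_mulVec, dotProduct_smul, smul_eq_mul]
      ring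
    linarith [hexp ▸ h]
  have hd := discrim_le_zero key
  rw [discrim] at hd
  nlinarith [hd]

/-- key smoothing lemma: `∑ (Bx)_k² / B_kk ≤ 2 xᵀBx` -/
lemma pctl_key (B : Matrix m m ℝ) (hsym : ∀ k j, B k j = B j k)
    (hpsd : ∀ v : m → ℝ, 0 ≤ v ⬝ᵥ B.mulVec v) (hdpos : ∀ k, 0 < B k k)
    (hdom : ∀ k, ∑ j, (if j = k then 0 else |B k j|) ≤ B k k) (x : m → ℝ) :
    ∑ k, (B.mulVec x) k ^ 2 / B k k ≤ 2 * (x ⬝ᵥ B.mulVec x) := by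
  set q : m → ℝ := fun k => (B.mulVec x) k / B k k with hq
  set T : ℝ := ∑ k, (B.mulVec x) k ^ 2 / B k k with hT
  have hqT : q ⬝ᵥ B.mulVec x = T := by
    rw [hT, dotProduct]
    refine Finset.sum_congr rfl fun k _ => ?_
    show (B.mulVec x) k / B k k * (B.mulVec x) k = _
    rw [div_mul_eq_mul_div, ← pow_two]
  have hqq : q ⬝ᵥ B.mulVec q ≤ 2 * T := by
    have h1 := pctl_quad_upper B hsym hdom q
    have h2 : ∑ k, B k k * q k ^ 2 = T := by
      rw [hT]
      refine Finset.sum_congr rfl fun k _ => ?_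
      show B k k * ((B.mulVec x) k / B k k) ^ 2 = _
      have hne : B k k ≠ 0 := (hdpos k).ne'
      rw [div_pow, pow_two (B k k), ← mul_div_assoc, mul_div_mul_left _ _ hne]
    linarith
  have hcs := pctl_CS B hsym hpsd q x
  rw [hqT] at hcs
  have hTnn : 0 ≤ T := Finset.sum_nonneg fun k _ =>
    div_nonneg (sq_nonneg _) (hdpos k).le
  have hQ : 0 ≤ x ⬝ᵥ B.mulVec x := hpsd x
  have hqBq : 0 ≤ q ⬝ᵥ B.mulVec q := hpsd q
  nlinarith [hcs, hqq, hTnn, hQ]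

/-- eigenvalue bounded by max abs row sum -/
lemma pctl_eig_bound (B : Matrix m m ℝ) (μ : ℝ) (v : m → ℝ) (hv : v ≠ 0)
    (heig : B.mulVec v = μ • v) : μ ≤ ⨆ k, ∑ j, |B k j| := by
  obtain ⟨j₀, hj₀⟩ := Function.ne_iff.mp hv
  haveI : Nonempty m := ⟨j₀⟩
  obtain ⟨k₀, _, hk₀⟩ := Finset.exists_max_image Finset.univ (fun k => |v k|)
    ⟨j₀, Finset.mem_univ j₀⟩
  have hvk₀ : 0 < |v k₀| := lt_of_lt_of_le (abs_pos.mpr hj₀) (hk₀ j₀ (Finset.mem_univ j₀))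
  have heq : μ * v k₀ = ∑ j, B k₀ j * v j := by
    have := congrFun heig k₀
    simpa [Matrix.mulVec, dotProduct, Pi.smul_apply, smul_eq_mul] using this.symm
  have habs : |μ| * |v k₀| ≤ (∑ j, |B k₀ j|) * |v k₀| := by
    calc |μ| * |v k₀| = |μ * v k₀| := (abs_mul _ _).symm
      _ = |∑ j, B k₀ j * v j| := by rw [heq]
      _ ≤ ∑ j, |B k₀ j * v j| := Finset.abs_sum_le_sum_abs _ _
      _ ≤ ∑ j, |B k₀ j| * |v k₀| := by
          refine Finset.sum_le_sum fun j _ => ?_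
          rw [abs_mul]
          exact mul_le_mul_of_nonneg_left (hk₀ j (Finset.mem_univ j)) (abs_nonneg _)
      _ = (∑ j, |B k₀ j|) * |v k₀| := (Finset.sum_mul _ _ _).symm
  have hμ : |μ| ≤ ∑ j, |B k₀ j| := le_of_mul_le_mul_right (by linarith [habs]) hvk₀
  have hle : (∑ j, |B k₀ j|) ≤ ⨆ k, ∑ j, |B k j| :=
    le_ciSup (f := fun k => ∑ j, |B k j|) (Set.Finite.bddAbove (Set.finite_range _)) k₀
  linarith [le_abs_self μ, hμ, hle]

/-- extracting an eigenvector from the spectrum -/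
lemma pctl_spectrum_eig (B : Matrix m m ℝ) (μ : ℝ) (hμ : μ ∈ spectrum ℝ B) :
    ∃ v : m → ℝ, v ≠ 0 ∧ B.mulVec v = μ • v := by
  have h := spectrum.mem_iff.mp hμ
  rw [Matrix.isUnit_iff_isUnit_det] at h
  have hdet : ((algebraMap ℝ (Matrix m m ℝ)) μ - B).det = 0 := by
    by_contra hne
    exact h (isUnit_iff_ne_zero.mpr hne)
  obtain ⟨v, hv0, hv⟩ := (Matrix.exists_mulVec_eq_zero_iff).mpr hdet
  refine ⟨v, hv0, ?_⟩
  have : (algebraMap ℝ (Matrix m m ℝ)) μ = μ • (1 : Matrix m m ℝ) := by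
    rw [Algebra.algebraMap_eq_smul_one]
  rw [this, Matrix.sub_mulVec, Matrix.smul_mulVec, Matrix.one_mulVec] at hv
  have := sub_eq_zero.mp hv
  rw [this]

lemma pctl_dot_elim {α β : Type*} [Fintype α] [Fintype β] (a c : α → ℝ) (b d : β → ℝ) :
    Sum.elim a b ⬝ᵥ Sum.elim c d = a ⬝ᵥ c + b ⬝ᵥ d := by
  simp [dotProduct, Fintype.sum_sum_type]

lemma pctl_fromBlocks_ext {l m o p : Type*} {A A' : Matrix l o ℝ} {B B' : Matrix l p ℝ}
    {C C' : Matrix m o ℝ} {D D' : Matrix m p ℝ} (h1 : A = A') (h2 : B = B') (h3 : C = C')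
    (h4 : D = D') : Matrix.fromBlocks A B C D = Matrix.fromBlocks A' B' C' D' := by
  subst h1 h2 h3 h4; rfl

lemma pctl_inv_diagonal {m : Type*} [Fintype m] [DecidableEq m] (v : m → ℝ)
    (hv : ∀ k, v k ≠ 0) :
    (Matrix.diagonal v)⁻¹ = Matrix.diagonal (fun k => (v k)⁻¹) := by
  refine Matrix.inv_eq_right_inv ?_
  rw [Matrix.diagonal_mul_diagonal, ← Matrix.diagonal_one]
  have h : (fun i => v i * (v i)⁻¹) = fun _ => (1:ℝ) := funext fun k => mul_inv_cancel₀ (hv k)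
  rw [h]

lemma pctl_inv_row_bound {N : Type*} [Fintype N] [DecidableEq N]
    (B : Matrix N N ℝ) (d : N → ℝ) (hd : ∀ k, d k < 0) (hBinv : ∀ k j, 0 ≤ B⁻¹ k j)
    (hinv : B⁻¹ * B = 1) (hrow : ∀ k, -d k ≤ ∑ l, B k l) (a : N) :
    ∑ b, |B⁻¹ a b * d b| ≤ 1 := by
  calc ∑ b, |B⁻¹ a b * d b| = ∑ b, B⁻¹ a b * (-d b) := by
        refine Finset.sum_congr rfl fun b _ => ?_
        rw [abs_mul, abs_of_nonneg (hBinv a b), abs_of_neg (hd b)]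
    _ ≤ ∑ b, B⁻¹ a b * (∑ l, B b l) :=
        Finset.sum_le_sum fun b _ => mul_le_mul_of_nonneg_left (hrow b) (hBinv a b)
    _ = ∑ l, (∑ b, B⁻¹ a b * B b l) := by
        simp only [Finset.mul_sum]
        rw [Finset.sum_comm]
    _ = ∑ l, (B⁻¹ * B) a l := by
        refine Finset.sum_congr rfl fun l _ => ?_
        rw [Matrix.mul_apply]
    _ = 1 := by
        rw [hinv]
        simp [Matrix.one_apply]

lemma pctl_rowsum_calc {N : Type*} [Fintype N] [DecidableEq N]
    (B : Matrix N N ℝ) (a : N) (hd : 0 < B a a)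
    (hdom : ∑ j, (if j = a then (0:ℝ) else |B a j|) ≤ B a a) :
    (B a a)⁻¹ * ∑ b, |B a b| ≤ 2 := by
  have hsplit := pctl_split_diag (fun b => |B a b|) a
  rw [hsplit, abs_of_pos hd]
  have h2 : B a a + ∑ j, (if j = a then (0:ℝ) else |B a j|) ≤ 2 * B a a := by linarith
  calc (B a a)⁻¹ * (B a a + ∑ j, (if j = a then (0:ℝ) else |B a j|))
      ≤ (B a a)⁻¹ * (2 * B a a) := by
        exact mul_le_mul_of_nonneg_left h2 (inv_nonneg.mpr hd.le)
    _ = 2 := by field_simp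

lemma pctl_prod_rowsum {N : Type*} [Fintype N] (P Q : Matrix N N ℝ) (k : N) :
    ∑ j, |(P * Q) k j| ≤ ∑ l, |P k l| * (⨆ i, ∑ j, |Q i j|) := by
  calc ∑ j, |(P * Q) k j| ≤ ∑ j, ∑ l, |P k l| * |Q l j| := by
        refine Finset.sum_le_sum fun j _ => ?_
        rw [Matrix.mul_apply]
        refine le_trans (Finset.abs_sum_le_sum_abs _ _) ?_
        refine Finset.sum_le_sum fun l _ => ?_
        rw [abs_mul]
    _ = ∑ l, |P k l| * ∑ j, |Q l j| := by
        rw [Finset.sum_comm]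
        exact Finset.sum_congr rfl fun l _ => (Finset.mul_sum _ _ _).symm
    _ ≤ ∑ l, |P k l| * (⨆ i, ∑ j, |Q i j|) := by
        refine Finset.sum_le_sum fun l _ => mul_le_mul_of_nonneg_left ?_ (abs_nonneg _)
        exact le_ciSup (f := fun i => ∑ j, |Q i j|)
          (Set.Finite.bddAbove (Set.finite_range _)) l

set_option maxHeartbeats 2000000

/-- for the PCTL smoother of the 3T system,
`H := (M + Mᵀ − A)⁻¹ MᵀD⁻¹M` factors as `H = H₁H₂` and
`λ_max(H) ≤ ‖H₁‖_∞ ‖H₂‖_∞ ≤ 4`; consequently `G₂ = I − M⁻¹A` satisfies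
`‖G₂e‖_A² ≤ ‖e‖_A² − (1/4)(D⁻¹Ae, Ae)` for all `e`. -/
theorem pctl_smoothing_bound {n : ℕ}
    (Ar Ai Ae : Matrix (Fin n) (Fin n) ℝ) (dr di : Fin n → ℝ)
    (hArM : (∀ k, 0 < Ar k k) ∧ (∀ k j, k ≠ j → Ar k j ≤ 0) ∧ ∀ k j, 0 ≤ Ar⁻¹ k j)
    (hAiM : (∀ k, 0 < Ai k k) ∧ (∀ k j, k ≠ j → Ai k j ≤ 0) ∧ ∀ k j, 0 ≤ Ai⁻¹ k j)
    (hAeM : (∀ k, 0 < Ae k k) ∧ (∀ k j, k ≠ j → Ae k j ≤ 0) ∧ ∀ k j, 0 ≤ Ae⁻¹ k j)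
    (hdr : ∀ k, dr k < 0) (hdi : ∀ k, di k < 0)
    (A M D H₁ H₂ : Matrix ((Fin n ⊕ Fin n) ⊕ Fin n) ((Fin n ⊕ Fin n) ⊕ Fin n) ℝ)
    (hAdef : A = Matrix.fromBlocks (Matrix.fromBlocks Ar 0 0 Ai)
      (Matrix.fromRows (Matrix.diagonal dr)ᵀ (Matrix.diagonal di)ᵀ)
      (Matrix.fromCols (Matrix.diagonal dr) (Matrix.diagonal di)) Ae)
    (hApd : A.PosDef)
    (hdd : ∀ k, ∑ j ∈ Finset.univ \ {k}, |A k j| < A k k)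
    (hMdef : M = Matrix.fromBlocks (Matrix.fromBlocks Ar 0 0 Ai) 0
      (Matrix.fromCols (Matrix.diagonal dr) (Matrix.diagonal di)) Ae)
    (hDdef : D = Matrix.diagonal fun k => A k k)
    (hH₁ : H₁ = Matrix.fromBlocks (Matrix.fromBlocks 1 0 0 1)
      (Matrix.fromRows (Ar⁻¹ * (Matrix.diagonal dr)ᵀ) (Ai⁻¹ * (Matrix.diagonal di)ᵀ)) 0 1)
    (hH₂ : H₂ = Matrix.fromBlocks
      (Matrix.fromBlocks ((Matrix.diagonal fun k => Ar k k)⁻¹ * Ar) 0 0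
        ((Matrix.diagonal fun k => Ai k k)⁻¹ * Ai)) 0
      (Matrix.fromCols ((Matrix.diagonal fun k => Ae k k)⁻¹ * Matrix.diagonal dr)
        ((Matrix.diagonal fun k => Ae k k)⁻¹ * Matrix.diagonal di))
      ((Matrix.diagonal fun k => Ae k k)⁻¹ * Ae)) :
    (M + Mᵀ - A)⁻¹ * (Mᵀ * D⁻¹ * M) = H₁ * H₂ ∧
    (∀ μ ∈ spectrum ℝ ((M + Mᵀ - A)⁻¹ * (Mᵀ * D⁻¹ * M)),
        μ ≤ (⨆ k, ∑ j, |H₁ k j|) * (⨆ k, ∑ j, |H₂ k j|)) ∧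
    (⨆ k, ∑ j, |H₁ k j|) * (⨆ k, ∑ j, |H₂ k j|) ≤ 4 ∧
    (∀ e : (Fin n ⊕ Fin n) ⊕ Fin n → ℝ,
        ((1 - M⁻¹ * A).mulVec e) ⬝ᵥ A.mulVec ((1 - M⁻¹ * A).mulVec e) ≤
          e ⬝ᵥ A.mulVec e - (1 / 4) * ((D⁻¹.mulVec (A.mulVec e)) ⬝ᵥ A.mulVec e)) := by
  -- entrywise symmetry of A
  have hAs : ∀ i j, A i j = A j i := by
    intro i j
    have h := hApd.isHermitian.apply j i
    simpa using h
  -- block symmetry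
  have hArs : ∀ k j, Ar k j = Ar j k := by
    intro k j
    have := hAs (Sum.inl (Sum.inl k)) (Sum.inl (Sum.inl j))
    simpa [hAdef] using this
  have hAis : ∀ k j, Ai k j = Ai j k := by
    intro k j
    have := hAs (Sum.inl (Sum.inr k)) (Sum.inl (Sum.inr j))
    simpa [hAdef] using this
  have hAes : ∀ k j, Ae k j = Ae j k := by
    intro k j
    have := hAs (Sum.inr k) (Sum.inr j)
    simpa [hAdef] using this
  have hArT : Arᵀ = Ar := by ext i j; exact hArs j i
  have hAiT : Aiᵀ = Ai := by ext i j; exact hAis j i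
  have hAeT : Aeᵀ = Ae := by ext i j; exact hAes j i
  -- quadratic forms of blocks via A
  have hqr : ∀ x : Fin n → ℝ, (Sum.elim (Sum.elim x 0) 0) ⬝ᵥ
      A.mulVec (Sum.elim (Sum.elim x 0) 0) = x ⬝ᵥ Ar.mulVec x := by
    intro x
    rw [hAdef]
    simp [Matrix.fromBlocks_mulVec, pctl_dot_elim, Sum.elim_comp_inl, Sum.elim_comp_inr,
      Matrix.mulVec_zero]
  have hqi : ∀ y : Fin n → ℝ, (Sum.elim (Sum.elim 0 y) 0) ⬝ᵥ
      A.mulVec (Sum.elim (Sum.elim 0 y) 0) = y ⬝ᵥ Ai.mulVec y := by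
    intro y
    rw [hAdef]
    simp [Matrix.fromBlocks_mulVec, pctl_dot_elim, Sum.elim_comp_inl, Sum.elim_comp_inr,
      Matrix.mulVec_zero]
  have hqe : ∀ z : Fin n → ℝ, (Sum.elim (Sum.elim 0 0) z) ⬝ᵥ
      A.mulVec (Sum.elim (Sum.elim 0 0) z) = z ⬝ᵥ Ae.mulVec z := by
    intro z
    rw [hAdef]
    simp [Matrix.fromBlocks_mulVec, pctl_dot_elim, Sum.elim_comp_inl, Sum.elim_comp_inr,
      Matrix.mulVec_zero]
  -- positive definiteness of the blocks
  have hblockpd : ∀ (B : Matrix (Fin n) (Fin n) ℝ),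
      (∀ x : Fin n → ℝ, x ≠ 0 → ∃ v : (Fin n ⊕ Fin n) ⊕ Fin n → ℝ, v ≠ 0 ∧
        v ⬝ᵥ A.mulVec v = x ⬝ᵥ B.mulVec x) → (∀ k j, B k j = B j k) → B.PosDef := by
    intro B hquad hsym
    refine Matrix.PosDef.of_dotProduct_mulVec_pos ?_ ?_
    · ext i j
      simp only [Matrix.conjTranspose_apply, star_trivial]
      exact hsym j i
    · intro x hx
      obtain ⟨v, hv0, hv⟩ := hquad x hx
      have := hApd.dotProduct_mulVec_pos hv0
      simpa [hv] using this
  have hArpd : Ar.PosDef := by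
    refine hblockpd Ar (fun x hx => ⟨Sum.elim (Sum.elim x 0) 0, ?_, hqr x⟩) hArs
    obtain ⟨k, hk⟩ := Function.ne_iff.mp hx
    exact Function.ne_iff.mpr ⟨Sum.inl (Sum.inl k), hk⟩
  have hAipd : Ai.PosDef := by
    refine hblockpd Ai (fun y hy => ⟨Sum.elim (Sum.elim 0 y) 0, ?_, hqi y⟩) hAis
    obtain ⟨k, hk⟩ := Function.ne_iff.mp hy
    exact Function.ne_iff.mpr ⟨Sum.inl (Sum.inr k), hk⟩
  have hAepd : Ae.PosDef := by
    refine hblockpd Ae (fun z hz => ⟨Sum.elim (Sum.elim 0 0) z, ?_, hqe z⟩) hAes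
    obtain ⟨k, hk⟩ := Function.ne_iff.mp hz
    exact Function.ne_iff.mpr ⟨Sum.inr k, hk⟩
  have hArdet : IsUnit Ar.det := isUnit_iff_ne_zero.mpr hArpd.det_pos.ne'
  have hAidet : IsUnit Ai.det := isUnit_iff_ne_zero.mpr hAipd.det_pos.ne'
  have hAedet : IsUnit Ae.det := isUnit_iff_ne_zero.mpr hAepd.det_pos.ne'
  have hArpsd : ∀ x : Fin n → ℝ, 0 ≤ x ⬝ᵥ Ar.mulVec x := by
    intro x
    by_cases hx : x = 0
    · simp [hx]
    · simpa using (hArpd.dotProduct_mulVec_pos hx).le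
  have hAipsd : ∀ y : Fin n → ℝ, 0 ≤ y ⬝ᵥ Ai.mulVec y := by
    intro y
    by_cases hy : y = 0
    · simp [hy]
    · simpa using (hAipd.dotProduct_mulVec_pos hy).le
  have hAepsd : ∀ z : Fin n → ℝ, 0 ≤ z ⬝ᵥ Ae.mulVec z := by
    intro z
    by_cases hz : z = 0
    · simp [hz]
    · simpa using (hAepd.dotProduct_mulVec_pos hz).le
  -- diagonal dominance restated
  have hdd2 : ∀ k, ∑ j, (if j = k then (0:ℝ) else |A k j|) < A k k := by
    intro k
    have h := hdd k
    have hsplit := pctl_split_diag (fun j => |A k j|) k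
    have herase : ∑ j ∈ Finset.univ \ {k}, |A k j| + |A k k| = ∑ j, |A k j| := by
      rw [Finset.sdiff_singleton_eq_erase]
      exact Finset.sum_erase_add _ _ (Finset.mem_univ k)
    linarith
  have hr1 : ∀ k, (∑ j, (if j = k then (0:ℝ) else |Ar k j|)) + |dr k| < Ar k k := by
    intro k
    have h := hdd2 (Sum.inl (Sum.inl k))
    rw [hAdef] at h
    simp only [Fintype.sum_sum_type, Matrix.fromBlocks_apply₁₁, Matrix.fromBlocks_apply₁₂,
      Matrix.fromRows_apply_inl, Matrix.transpose_apply, Matrix.diagonal_apply,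
      Sum.inl.injEq, Sum.inr.injEq, Matrix.zero_apply, abs_zero] at h
    simp only [reduceCtorEq, if_false, ite_self, Finset.sum_const_zero, add_zero, zero_add,
      apply_ite (abs : ℝ → ℝ), abs_zero, Finset.sum_ite_eq', Finset.sum_ite_eq,
      Finset.mem_univ, if_true] at h
    exact h
  have hi1 : ∀ k, (∑ j, (if j = k then (0:ℝ) else |Ai k j|)) + |di k| < Ai k k := by
    intro k
    have h := hdd2 (Sum.inl (Sum.inr k))
    rw [hAdef] at h
    simp only [Fintype.sum_sum_type, Matrix.fromBlocks_apply₁₁, Matrix.fromBlocks_apply₁₂,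
      Matrix.fromBlocks_apply₂₁, Matrix.fromBlocks_apply₂₂,
      Matrix.fromRows_apply_inl, Matrix.fromRows_apply_inr, Matrix.transpose_apply,
      Matrix.diagonal_apply, Sum.inl.injEq, Sum.inr.injEq, Matrix.zero_apply, abs_zero] at h
    simp only [reduceCtorEq, if_false, ite_self, Finset.sum_const_zero, add_zero, zero_add,
      apply_ite (abs : ℝ → ℝ), abs_zero, Finset.sum_ite_eq', Finset.sum_ite_eq,
      Finset.mem_univ, if_true] at h
    exact h
  have he1 : ∀ k, |dr k| + |di k| + (∑ j, (if j = k then (0:ℝ) else |Ae k j|)) < Ae k k := by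
    intro k
    have h := hdd2 (Sum.inr k)
    rw [hAdef] at h
    simp only [Fintype.sum_sum_type, Matrix.fromBlocks_apply₂₁, Matrix.fromBlocks_apply₂₂,
      Matrix.fromCols_apply_inl, Matrix.fromCols_apply_inr,
      Matrix.diagonal_apply, Sum.inl.injEq, Sum.inr.injEq, Matrix.zero_apply, abs_zero] at h
    simp only [reduceCtorEq, if_false, ite_self, Finset.sum_const_zero, add_zero, zero_add,
      apply_ite (abs : ℝ → ℝ), abs_zero, Finset.sum_ite_eq', Finset.sum_ite_eq,
      Finset.mem_univ, if_true] at h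
    linarith
  have hr2 : ∀ k, (∑ j, (if j = k then (0:ℝ) else |Ar k j|)) ≤ Ar k k := by
    intro k; have := hr1 k; have := abs_nonneg (dr k); linarith
  have hi2 : ∀ k, (∑ j, (if j = k then (0:ℝ) else |Ai k j|)) ≤ Ai k k := by
    intro k; have := hi1 k; have := abs_nonneg (di k); linarith
  have he2 : ∀ k, (∑ j, (if j = k then (0:ℝ) else |Ae k j|)) ≤ Ae k k := by
    intro k; have := he1 k; have h1 := abs_nonneg (dr k); have h2 := abs_nonneg (di k); linarith
  -- the symmetrized matrix X := M + Mᵀ - A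
  have hBT : (Matrix.fromBlocks Ar 0 0 Ai)ᵀ = Matrix.fromBlocks Ar 0 0 Ai := by
    rw [Matrix.fromBlocks_transpose, hArT, hAiT, Matrix.transpose_zero]
  have hMT : Mᵀ = Matrix.fromBlocks (Matrix.fromBlocks Ar 0 0 Ai)
      (Matrix.fromRows (Matrix.diagonal dr)ᵀ (Matrix.diagonal di)ᵀ) 0 Ae := by
    rw [hMdef, Matrix.fromBlocks_transpose, hBT, Matrix.transpose_fromCols,
      Matrix.transpose_zero, hAeT]
  have hXeq : M + Mᵀ - A = Matrix.fromBlocks (Matrix.fromBlocks Ar 0 0 Ai) 0 0 Ae := by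
    rw [hMT, hMdef, hAdef]
    ext i j
    rcases i with (i|i)|i <;> rcases j with (j|j)|j <;>
      simp [Matrix.fromBlocks, Matrix.fromRows, Matrix.fromCols]
  have hXdet : IsUnit (Matrix.fromBlocks (Matrix.fromBlocks Ar 0 0 Ai) 0 0 Ae).det := by
    rw [Matrix.det_fromBlocks_zero₁₂, Matrix.det_fromBlocks_zero₁₂]
    exact (hArdet.mul hAidet).mul hAedet
  have hMHt : (Matrix.fromBlocks (Matrix.fromBlocks Ar 0 0 Ai) 0 0 Ae) * H₁ = Mᵀ := by
    rw [hH₁, hMT, Matrix.fromBlocks_multiply]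
    refine pctl_fromBlocks_ext ?_ ?_ ?_ ?_
    · rw [Matrix.fromBlocks_one, Matrix.mul_one, Matrix.zero_mul, add_zero]
    · rw [Matrix.zero_mul, add_zero, Matrix.fromBlocks_mul_fromRows,
        Matrix.zero_mul, Matrix.zero_mul, add_zero, zero_add,
        ← Matrix.mul_assoc, ← Matrix.mul_assoc,
        Matrix.mul_nonsing_inv _ hArdet, Matrix.mul_nonsing_inv _ hAidet,
        Matrix.one_mul, Matrix.one_mul]
    · rw [Matrix.zero_mul, Matrix.mul_zero, add_zero]
    · rw [Matrix.zero_mul, Matrix.mul_one, zero_add]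
  -- D⁻¹ * M = H₂
  have hADr : ∀ k, A (Sum.inl (Sum.inl k)) (Sum.inl (Sum.inl k)) = Ar k k := by
    intro k; rw [hAdef]; simp
  have hADi : ∀ k, A (Sum.inl (Sum.inr k)) (Sum.inl (Sum.inr k)) = Ai k k := by
    intro k; rw [hAdef]; simp
  have hADe : ∀ k, A (Sum.inr k) (Sum.inr k) = Ae k k := by
    intro k; rw [hAdef]; simp
  have hvA : ∀ k, A k k ≠ 0 := by
    intro k
    rcases k with (a|a)|a
    · rw [hADr]; exact (hArM.1 a).ne'
    · rw [hADi]; exact (hAiM.1 a).ne'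
    · rw [hADe]; exact (hAeM.1 a).ne'
  have hDinv : D⁻¹ = Matrix.diagonal (Sum.elim (Sum.elim (fun k => (Ar k k)⁻¹)
      (fun k => (Ai k k)⁻¹)) (fun k => (Ae k k)⁻¹)) := by
    rw [hDdef, pctl_inv_diagonal _ hvA]
    have h : (fun k => (A k k)⁻¹) = (Sum.elim (Sum.elim (fun k => (Ar k k)⁻¹)
        (fun k => (Ai k k)⁻¹)) (fun k => (Ae k k)⁻¹)) := by
      funext i
      rcases i with (i|i)|i
      · simp [hADr]
      · simp [hADi]
      · simp [hADe]
    rw [h]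
  have hdgr : (Matrix.diagonal fun k => Ar k k)⁻¹ = Matrix.diagonal (fun k => (Ar k k)⁻¹) :=
    pctl_inv_diagonal _ (fun k => (hArM.1 k).ne')
  have hdgi : (Matrix.diagonal fun k => Ai k k)⁻¹ = Matrix.diagonal (fun k => (Ai k k)⁻¹) :=
    pctl_inv_diagonal _ (fun k => (hAiM.1 k).ne')
  have hdge : (Matrix.diagonal fun k => Ae k k)⁻¹ = Matrix.diagonal (fun k => (Ae k k)⁻¹) :=
    pctl_inv_diagonal _ (fun k => (hAeM.1 k).ne')
  have hDinvM : D⁻¹ * M = H₂ := by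
    rw [hDinv, hMdef, hH₂, ← Matrix.fromBlocks_diagonal, ← Matrix.fromBlocks_diagonal,
      Matrix.fromBlocks_multiply, Matrix.fromBlocks_multiply]
    simp only [Matrix.zero_mul, Matrix.mul_zero, add_zero, zero_add, Matrix.mul_fromCols]
    exact pctl_fromBlocks_ext (pctl_fromBlocks_ext (by rw [hdgr]) rfl rfl (by rw [hdgi]))
      rfl (by rw [hdge]) (by rw [hdge])
  -- Part 1
  have hpart1 : (M + Mᵀ - A)⁻¹ * (Mᵀ * D⁻¹ * M) = H₁ * H₂ := by
    rw [hXeq, Matrix.mul_assoc Mᵀ, hDinvM, ← hMHt, Matrix.mul_assoc _ H₁ H₂,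
      ← Matrix.mul_assoc _ _ (H₁ * H₂), Matrix.nonsing_inv_mul _ hXdet, Matrix.one_mul]
  -- row sums of the blocks
  have hArinv : Ar⁻¹ * Ar = 1 := Matrix.nonsing_inv_mul _ hArdet
  have hAiinv : Ai⁻¹ * Ai = 1 := Matrix.nonsing_inv_mul _ hAidet
  have hrowsum : ∀ (B : Matrix (Fin n) (Fin n) ℝ) (d : Fin n → ℝ),
      (∀ k j, k ≠ j → B k j ≤ 0) →
      (∀ k, (∑ j, (if j = k then (0:ℝ) else |B k j|)) + |d k| < B k k) →
      ∀ b, -d b ≤ ∑ l, B b l := by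
    intro B d hoff h1 b
    have hs := pctl_split_diag (fun l => B b l) b
    have hzero : ∑ l, ((if l = b then (0:ℝ) else |B b l|) + (if l = b then 0 else B b l)) = 0 := by
      refine Finset.sum_eq_zero fun l _ => ?_
      by_cases hl : l = b
      · simp [hl]
      · rw [if_neg hl, if_neg hl, abs_of_nonpos (hoff b l (fun h => hl h.symm))]
        ring
    rw [Finset.sum_add_distrib] at hzero
    have hd := h1 b
    have := neg_abs_le (d b)
    linarith
  have hrowAr : ∀ b, -dr b ≤ ∑ l, Ar b l := hrowsum Ar dr hArM.2.1 hr1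
  have hrowAi : ∀ b, -di b ≤ ∑ l, Ai b l := hrowsum Ai di hAiM.2.1 hi1
  -- row sums of H₁ are at most 2
  have hH₁row : ∀ k, ∑ j, |H₁ k j| ≤ 2 := by
    intro k
    rw [hH₁]
    rcases k with (a|a)|a
    · simp only [Fintype.sum_sum_type, Matrix.fromBlocks_apply₁₁, Matrix.fromBlocks_apply₁₂,
        Matrix.fromRows_apply_inl, Matrix.diagonal_transpose, Matrix.mul_diagonal,
        Matrix.one_apply, Matrix.zero_apply, abs_zero, Finset.sum_const_zero, add_zero,
        apply_ite (abs : ℝ → ℝ), abs_one, Finset.sum_ite_eq, Finset.mem_univ, if_true]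
      have := pctl_inv_row_bound Ar dr hdr hArM.2.2 hArinv hrowAr a
      linarith
    · simp only [Fintype.sum_sum_type, Matrix.fromBlocks_apply₁₁, Matrix.fromBlocks_apply₁₂,
        Matrix.fromBlocks_apply₂₁, Matrix.fromBlocks_apply₂₂,
        Matrix.fromRows_apply_inr, Matrix.diagonal_transpose, Matrix.mul_diagonal,
        Matrix.one_apply, Matrix.zero_apply, abs_zero, Finset.sum_const_zero, add_zero,
        zero_add, apply_ite (abs : ℝ → ℝ), abs_one, Finset.sum_ite_eq, Finset.mem_univ,
        if_true] 
      have := pctl_inv_row_bound Ai di hdi hAiM.2.2 hAiinv hrowAi a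
      linarith
    · simp only [Fintype.sum_sum_type, Matrix.fromBlocks_apply₂₁, Matrix.fromBlocks_apply₂₂,
        Matrix.one_apply, Matrix.zero_apply, abs_zero, Finset.sum_const_zero, zero_add,
        apply_ite (abs : ℝ → ℝ), abs_one, Finset.sum_ite_eq, Finset.mem_univ, if_true]
      norm_num
  -- row sums of H₂ are at most 2
  have hH₂row : ∀ k, ∑ j, |H₂ k j| ≤ 2 := by
    intro k
    rw [hH₂, hdgr, hdgi, hdge]
    rcases k with (a|a)|a
    · simp only [Fintype.sum_sum_type, Matrix.fromBlocks_apply₁₁, Matrix.fromBlocks_apply₁₂,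
        Matrix.fromBlocks_apply₂₁, Matrix.fromBlocks_apply₂₂, Matrix.diagonal_mul,
        Matrix.zero_apply, abs_zero, Finset.sum_const_zero, add_zero, abs_mul]
      have h1 : ∀ b, |(Ar a a)⁻¹| * |Ar a b| = (Ar a a)⁻¹ * |Ar a b| := by
        intro b
        rw [abs_of_nonneg (inv_nonneg.mpr (hArM.1 a).le)]
      simp only [h1, ← Finset.mul_sum]
      exact pctl_rowsum_calc Ar a (hArM.1 a) (hr2 a)
    · simp only [Fintype.sum_sum_type, Matrix.fromBlocks_apply₁₁, Matrix.fromBlocks_apply₁₂,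
        Matrix.fromBlocks_apply₂₁, Matrix.fromBlocks_apply₂₂, Matrix.diagonal_mul,
        Matrix.zero_apply, abs_zero, Finset.sum_const_zero, add_zero, zero_add, abs_mul]
      have h1 : ∀ b, |(Ai a a)⁻¹| * |Ai a b| = (Ai a a)⁻¹ * |Ai a b| := by
        intro b
        rw [abs_of_nonneg (inv_nonneg.mpr (hAiM.1 a).le)]
      simp only [h1, ← Finset.mul_sum]
      exact pctl_rowsum_calc Ai a (hAiM.1 a) (hi2 a)
    · simp only [Fintype.sum_sum_type, Matrix.fromBlocks_apply₂₁, Matrix.fromBlocks_apply₂₂,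
        Matrix.fromCols_apply_inl, Matrix.fromCols_apply_inr, Matrix.diagonal_mul,
        Matrix.diagonal_apply, Matrix.zero_apply, abs_zero, Finset.sum_const_zero, abs_mul,
        apply_ite (abs : ℝ → ℝ), mul_ite, mul_zero, Finset.sum_ite_eq, Finset.mem_univ, if_true]
      have hainv : |(Ae a a)⁻¹| = (Ae a a)⁻¹ := abs_of_nonneg (inv_nonneg.mpr (hAeM.1 a).le)
      simp only [hainv, ← Finset.mul_sum]
      have hsplit := pctl_split_diag (fun b => |Ae a b|) a
      have h0 : (Ae a a)⁻¹ * |dr a| + (Ae a a)⁻¹ * |di a| + (Ae a a)⁻¹ * ∑ b, |Ae a b|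
          = (Ae a a)⁻¹ * (|dr a| + |di a| + ∑ b, |Ae a b|) := by ring
      have h2 : |dr a| + |di a| + ∑ b, |Ae a b| ≤ 2 * Ae a a := by
        rw [hsplit, abs_of_pos (hAeM.1 a)]
        have := he1 a
        linarith
      calc (Ae a a)⁻¹ * |dr a| + (Ae a a)⁻¹ * |di a| + (Ae a a)⁻¹ * ∑ b, |Ae a b|
          ≤ (Ae a a)⁻¹ * (2 * Ae a a) := by
            rw [h0]
            exact mul_le_mul_of_nonneg_left h2 (inv_nonneg.mpr (hAeM.1 a).le)
        _ = 2 := by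
            field_simp
            exact div_self (hAeM.1 a).ne'
  -- the two suprema
  have hsup1n : 0 ≤ ⨆ k, ∑ j, |H₁ k j| :=
    Real.iSup_nonneg fun k => Finset.sum_nonneg fun j _ => abs_nonneg _
  have hsup2n : 0 ≤ ⨆ k, ∑ j, |H₂ k j| :=
    Real.iSup_nonneg fun k => Finset.sum_nonneg fun j _ => abs_nonneg _
  have hsup1 : (⨆ k, ∑ j, |H₁ k j|) ≤ 2 := Real.iSup_le hH₁row (by norm_num)
  have hsup2 : (⨆ k, ∑ j, |H₂ k j|) ≤ 2 := Real.iSup_le hH₂row (by norm_num)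
  have hpart3 : (⨆ k, ∑ j, |H₁ k j|) * (⨆ k, ∑ j, |H₂ k j|) ≤ 4 := by
    calc (⨆ k, ∑ j, |H₁ k j|) * (⨆ k, ∑ j, |H₂ k j|) ≤ 2 * 2 :=
        mul_le_mul hsup1 hsup2 hsup2n (by norm_num)
      _ = 4 := by norm_num
  -- Part 2
  have hpart2 : ∀ μ ∈ spectrum ℝ ((M + Mᵀ - A)⁻¹ * (Mᵀ * D⁻¹ * M)),
      μ ≤ (⨆ k, ∑ j, |H₁ k j|) * (⨆ k, ∑ j, |H₂ k j|) := by
    intro μ hμ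
    rw [hpart1] at hμ
    obtain ⟨v, hv0, hv⟩ := pctl_spectrum_eig (H₁ * H₂) μ hμ
    have h1 := pctl_eig_bound (H₁ * H₂) μ v hv0 hv
    refine le_trans h1 ?_
    refine Real.iSup_le (fun k => ?_) (mul_nonneg hsup1n hsup2n)
    refine le_trans (pctl_prod_rowsum H₁ H₂ k) ?_
    rw [← Finset.sum_mul]
    refine mul_le_mul_of_nonneg_right ?_ hsup2n
    exact le_ciSup (f := fun i => ∑ j, |H₁ i j|) (Set.Finite.bddAbove (Set.finite_range _)) k
  -- Part 4
  have hMdet : IsUnit M.det := by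
    rw [hMdef, Matrix.det_fromBlocks_zero₁₂, Matrix.det_fromBlocks_zero₁₂]
    exact (hArdet.mul hAidet).mul hAedet
  have hpart4 : ∀ e : (Fin n ⊕ Fin n) ⊕ Fin n → ℝ,
      ((1 - M⁻¹ * A).mulVec e) ⬝ᵥ A.mulVec ((1 - M⁻¹ * A).mulVec e) ≤
        e ⬝ᵥ A.mulVec e - (1 / 4) * ((D⁻¹.mulVec (A.mulVec e)) ⬝ᵥ A.mulVec e) := by
    intro e
    set a : ((Fin n ⊕ Fin n) ⊕ Fin n) → ℝ := A.mulVec e with ha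
    set w : ((Fin n ⊕ Fin n) ⊕ Fin n) → ℝ := M⁻¹.mulVec a with hwdef
    have hMw : M.mulVec w = a := by
      rw [hwdef, Matrix.mulVec_mulVec, Matrix.mul_nonsing_inv _ hMdet, Matrix.one_mulVec]
    have hGe : (1 - M⁻¹ * A).mulVec e = e - w := by
      rw [Matrix.sub_mulVec, Matrix.one_mulVec, hwdef, ha, ← Matrix.mulVec_mulVec]
    set x : Fin n → ℝ := fun k => w (Sum.inl (Sum.inl k)) with hx
    set y : Fin n → ℝ := fun k => w (Sum.inl (Sum.inr k)) with hy
    set z : Fin n → ℝ := fun k => w (Sum.inr k) with hz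
    have hwelim : w = Sum.elim (Sum.elim x y) z := by
      funext i; rcases i with (i|i)|i <;> rfl
    clear_value x y z
    have hMwe : M.mulVec w = Sum.elim (Sum.elim (Ar.mulVec x) (Ai.mulVec y))
        (fun k => dr k * x k + di k * y k + Ae.mulVec z k) := by
      rw [hMdef, hwelim, Matrix.fromBlocks_mulVec]
      funext i
      rcases i with (i|i)|i <;>
        simp [Matrix.fromBlocks_mulVec, Matrix.mulVec_diagonal, Sum.elim_comp_inl,
          Sum.elim_comp_inr, Matrix.mulVec_zero]
    have haelim : a = Sum.elim (Sum.elim (Ar.mulVec x) (Ai.mulVec y))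
        (fun k => dr k * x k + di k * y k + Ae.mulVec z k) := by
      rw [← hMw, hMwe]
    -- expansion of the error form
    have hc : e ⬝ᵥ A.mulVec w = w ⬝ᵥ a := by rw [ha]; exact pctl_dot_comm A hAs e w
    have hL : ((1 - M⁻¹ * A).mulVec e) ⬝ᵥ A.mulVec ((1 - M⁻¹ * A).mulVec e)
        = e ⬝ᵥ a - (2 * (w ⬝ᵥ a) - w ⬝ᵥ A.mulVec w) := by
      rw [hGe, Matrix.mulVec_sub, dotProduct_sub, sub_dotProduct, sub_dotProduct, hc, ← ha]
      ring
    have hMt : w ⬝ᵥ Mᵀ.mulVec w = w ⬝ᵥ M.mulVec w := by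
      rw [dotProduct_mulVec, Matrix.vecMul_transpose, dotProduct_comm]
    have hXw : w ⬝ᵥ (M + Mᵀ - A).mulVec w = 2 * (w ⬝ᵥ M.mulVec w) - w ⬝ᵥ A.mulVec w := by
      rw [Matrix.sub_mulVec, Matrix.add_mulVec, dotProduct_sub, dotProduct_add, hMt]
      ring
    have hXblocks : w ⬝ᵥ (M + Mᵀ - A).mulVec w
        = x ⬝ᵥ Ar.mulVec x + y ⬝ᵥ Ai.mulVec y + z ⬝ᵥ Ae.mulVec z := by
      rw [hXeq, hwelim, Matrix.fromBlocks_mulVec]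
      simp [Matrix.fromBlocks_mulVec, pctl_dot_elim, Sum.elim_comp_inl, Sum.elim_comp_inr,
        Matrix.mulVec_zero]
    have hwa : w ⬝ᵥ a = w ⬝ᵥ M.mulVec w := by rw [← hMw]
    -- the weighted residual norm
    have hDdot : (D⁻¹.mulVec a) ⬝ᵥ a
        = ∑ k, (Ar.mulVec x k)^2 / Ar k k + ∑ k, (Ai.mulVec y k)^2 / Ai k k
          + ∑ k, (dr k * x k + di k * y k + Ae.mulVec z k)^2 / Ae k k := by
      rw [hDinv, dotProduct]
      simp only [Matrix.mulVec_diagonal]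
      rw [Fintype.sum_sum_type, Fintype.sum_sum_type]
      congr 1
      · congr 1
        · refine Finset.sum_congr rfl fun k _ => ?_
          rw [haelim]
          simp only [Sum.elim_inl, Sum.elim_inr]
          rw [div_eq_mul_inv]
          ring
        · refine Finset.sum_congr rfl fun k _ => ?_
          rw [haelim]
          simp only [Sum.elim_inl, Sum.elim_inr]
          rw [div_eq_mul_inv]
          ring
      · refine Finset.sum_congr rfl fun k _ => ?_
        rw [haelim]
        simp only [Sum.elim_inl, Sum.elim_inr]
        rw [div_eq_mul_inv]
        ring
    -- the three bounds
    have hT1 : ∑ k, (Ar.mulVec x k)^2 / Ar k k ≤ 2 * (x ⬝ᵥ Ar.mulVec x) :=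
      pctl_key Ar hArs hArpsd hArM.1 hr2 x
    have hT2 : ∑ k, (Ai.mulVec y k)^2 / Ai k k ≤ 2 * (y ⬝ᵥ Ai.mulVec y) :=
      pctl_key Ai hAis hAipsd hAiM.1 hi2 y
    have hT3e : ∑ k, (Ae.mulVec z k)^2 / Ae k k ≤ 2 * (z ⬝ᵥ Ae.mulVec z) :=
      pctl_key Ae hAes hAepsd hAeM.1 he2 z
    have hgr : ∑ k, |dr k| * x k^2 ≤ x ⬝ᵥ Ar.mulVec x := by
      refine le_trans ?_ (pctl_quad_lower Ar hArs x)
      refine Finset.sum_le_sum fun k _ => ?_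
      refine mul_le_mul_of_nonneg_right ?_ (sq_nonneg _)
      have := hr1 k
      linarith
    have hgi : ∑ k, |di k| * y k^2 ≤ y ⬝ᵥ Ai.mulVec y := by
      refine le_trans ?_ (pctl_quad_lower Ai hAis y)
      refine Finset.sum_le_sum fun k _ => ?_
      refine mul_le_mul_of_nonneg_right ?_ (sq_nonneg _)
      have := hi1 k
      linarith
    have hcross : ∀ k, (dr k * x k + di k * y k)^2 / Ae k k
        ≤ |dr k| * x k^2 + |di k| * y k^2 := by
      intro k
      have hdr' : |dr k| = -dr k := abs_of_neg (hdr k)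
      have hdi' : |di k| = -di k := abs_of_neg (hdi k)
      have hoed : (0:ℝ) ≤ ∑ j, (if j = k then (0:ℝ) else |Ae k j|) :=
        Finset.sum_nonneg fun j _ => by positivity
      have hsum : |dr k| + |di k| ≤ Ae k k := by
        have := he1 k; linarith
      have hR : 0 ≤ |dr k| * x k^2 + |di k| * y k^2 := by positivity
      have h1 : (dr k * x k + di k * y k)^2
          ≤ (|dr k| + |di k|) * (|dr k| * x k^2 + |di k| * y k^2) := by
        rw [hdr', hdi']
        nlinarith [mul_pos (neg_pos.mpr (hdr k)) (neg_pos.mpr (hdi k)),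
          sq_nonneg (x k - y k), sq_nonneg (x k + y k)]
      calc (dr k * x k + di k * y k)^2 / Ae k k
          ≤ ((|dr k| + |di k|) * (|dr k| * x k^2 + |di k| * y k^2)) / Ae k k :=
            (div_le_div_iff_of_pos_right (hAeM.1 k)).mpr h1
        _ ≤ (Ae k k * (|dr k| * x k^2 + |di k| * y k^2)) / Ae k k :=
            (div_le_div_iff_of_pos_right (hAeM.1 k)).mpr (mul_le_mul_of_nonneg_right hsum hR)
        _ = |dr k| * x k^2 + |di k| * y k^2 := mul_div_cancel_left₀ _ (hAeM.1 k).ne'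
    have hsplit3 : ∀ k, (dr k * x k + di k * y k + Ae.mulVec z k)^2 / Ae k k
        ≤ 2 * ((dr k * x k + di k * y k)^2 / Ae k k) + 2 * ((Ae.mulVec z k)^2 / Ae k k) := by
      intro k
      have hpos := hAeM.1 k
      have h2 : (dr k * x k + di k * y k + Ae.mulVec z k)^2
          ≤ 2 * (dr k * x k + di k * y k)^2 + 2 * (Ae.mulVec z k)^2 := by
        nlinarith [sq_nonneg (dr k * x k + di k * y k - Ae.mulVec z k)]
      calc (dr k * x k + di k * y k + Ae.mulVec z k)^2 / Ae k k
          ≤ (2 * (dr k * x k + di k * y k)^2 + 2 * (Ae.mulVec z k)^2) / Ae k k :=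
            (div_le_div_iff_of_pos_right hpos).mpr h2
        _ = 2 * ((dr k * x k + di k * y k)^2 / Ae k k)
            + 2 * ((Ae.mulVec z k)^2 / Ae k k) := by ring
    have hsum3 : ∑ k, (dr k * x k + di k * y k + Ae.mulVec z k)^2 / Ae k k
        ≤ 2 * (x ⬝ᵥ Ar.mulVec x) + 2 * (y ⬝ᵥ Ai.mulVec y) + 4 * (z ⬝ᵥ Ae.mulVec z) := by
      have step1 : ∑ k, (dr k * x k + di k * y k + Ae.mulVec z k)^2 / Ae k k
          ≤ ∑ k, (2 * ((dr k * x k + di k * y k)^2 / Ae k k)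
            + 2 * ((Ae.mulVec z k)^2 / Ae k k)) :=
        Finset.sum_le_sum fun k _ => hsplit3 k
      have step2 : ∑ k, (2 * ((dr k * x k + di k * y k)^2 / Ae k k)
            + 2 * ((Ae.mulVec z k)^2 / Ae k k))
          = 2 * (∑ k, (dr k * x k + di k * y k)^2 / Ae k k)
            + 2 * (∑ k, (Ae.mulVec z k)^2 / Ae k k) := by
        rw [Finset.sum_add_distrib, ← Finset.mul_sum, ← Finset.mul_sum]
      have step3 : ∑ k, (dr k * x k + di k * y k)^2 / Ae k k
          ≤ x ⬝ᵥ Ar.mulVec x + y ⬝ᵥ Ai.mulVec y := by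
        have h4 : ∑ k, (dr k * x k + di k * y k)^2 / Ae k k
            ≤ ∑ k, (|dr k| * x k^2 + |di k| * y k^2) :=
          Finset.sum_le_sum fun k _ => hcross k
        rw [Finset.sum_add_distrib] at h4
        linarith
      linarith
    -- putting everything together
    rw [hL, hDdot]
    have hfinal : (1/4) * (∑ k, (Ar.mulVec x k)^2 / Ar k k + ∑ k, (Ai.mulVec y k)^2 / Ai k k
          + ∑ k, (dr k * x k + di k * y k + Ae.mulVec z k)^2 / Ae k k)
        ≤ 2 * (w ⬝ᵥ a) - w ⬝ᵥ A.mulVec w := by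
      have hXX : 2 * (w ⬝ᵥ a) - w ⬝ᵥ A.mulVec w
          = x ⬝ᵥ Ar.mulVec x + y ⬝ᵥ Ai.mulVec y + z ⬝ᵥ Ae.mulVec z := by
        rw [hwa, ← hXw, hXblocks]
      rw [hXX]
      linarith
    linarith
  exact ⟨hpart1, hpart2, hpart3, hpart4⟩
end

section
/- For the PCTL algorithm applied to the 3T system with the diagonal interpolation P = [P_r; P_i; I] defined by (P_α)_{kk} = −Σ_j b^α_{kj} d^α_j (α = r, i), the weak approximation inequality ‖e_F − P_FC e_C‖_{0,F}² ≤ β‖e‖_A² holds with β = max over rows of the explicit quantities m_k built from a^α_{kk}, the partial sums Σ_j b^α_{kj} d^α_j, the row sums s_k of A, and the coupling entries d^r_k, d^i_k; in particular it suffices that the matrix Q := βA − Lᵀ D_F L is weakly diagonally dominant with nonnegative diagonal, where L = [I, 0, −P_r; 0, I, −P_i] and D_F = diag(D_r, D_i). -/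
open Matrix Finset


section pctl_aux
variable {m : Type*} [Fintype m] [DecidableEq m]

private lemma sum_sdiff_singleton_eq (f : m → ℝ) (x : m) :
    ∑ j ∈ Finset.univ \ {x}, f j = (∑ j, f j) - f x := by
  rw [Finset.sdiff_singleton_eq_erase, Finset.sum_erase_eq_sub (Finset.mem_univ x)]

private lemma sum_sdiff_comm (g : m → m → ℝ) :
    ∑ i, ∑ j ∈ Finset.univ \ {i}, g i j = ∑ i, ∑ j ∈ Finset.univ \ {i}, g j i := by
  rw [Finset.sum_comm' (fun x y => by
    simp [Finset.mem_sdiff, ne_comm, eq_comm] : ∀ x y : m,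
      x ∈ Finset.univ ∧ y ∈ Finset.univ \ {x} ↔ x ∈ Finset.univ \ {y} ∧ y ∈ Finset.univ)]

private lemma psd_of_dd (Q : Matrix m m ℝ) (hsym : ∀ i j, Q j i = Q i j)
    (hdd : ∀ k, ∑ j ∈ Finset.univ \ {k}, |Q k j| ≤ Q k k) (x : m → ℝ) :
    0 ≤ x ⬝ᵥ Q.mulVec x := by
  have h1 : x ⬝ᵥ Q.mulVec x = ∑ i, ∑ j, Q i j * (x i * x j) := by
    simp only [dotProduct, mulVec, Finset.mul_sum]
    exact Finset.sum_congr rfl fun i _ => Finset.sum_congr rfl fun j _ => by ring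
  have h2 : x ⬝ᵥ Q.mulVec x
      = ∑ i, (Q i i * x i ^ 2 + ∑ j ∈ Finset.univ \ {i}, Q i j * (x i * x j)) := by
    rw [h1]
    refine Finset.sum_congr rfl fun i _ => ?_
    rw [sum_sdiff_singleton_eq (fun j => Q i j * (x i * x j)) i]
    ring
  have hswap : ∑ i, ∑ j ∈ Finset.univ \ {i}, |Q i j| * x i ^ 2
      = ∑ i, ∑ j ∈ Finset.univ \ {i}, |Q i j| * ((x i)^2 + (x j)^2) / 2 := by
    have h4 : ∑ i, ∑ j ∈ Finset.univ \ {i}, |Q i j| * x j ^ 2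
        = ∑ i, ∑ j ∈ Finset.univ \ {i}, |Q i j| * x i ^ 2 := by
      rw [sum_sdiff_comm (fun i j => |Q i j| * x j ^ 2)]
      simp only [hsym]
    calc ∑ i, ∑ j ∈ Finset.univ \ {i}, |Q i j| * x i ^ 2
        = (∑ i, ∑ j ∈ Finset.univ \ {i}, |Q i j| * x i ^ 2
            + ∑ i, ∑ j ∈ Finset.univ \ {i}, |Q i j| * x j ^ 2) / 2 := by rw [h4]; ring
      _ = ∑ i, ∑ j ∈ Finset.univ \ {i}, |Q i j| * ((x i)^2 + (x j)^2) / 2 := by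
          rw [← Finset.sum_add_distrib, Finset.sum_div]
          refine Finset.sum_congr rfl fun i _ => ?_
          rw [← Finset.sum_add_distrib, Finset.sum_div]
          exact Finset.sum_congr rfl fun j _ => by ring
  have key : ∀ i j, 0 ≤ Q i j * (x i * x j) + |Q i j| * ((x i)^2 + (x j)^2) / 2 := by
    intro i j
    have h5 : 0 ≤ (|Q i j| + Q i j) * (x i + x j)^2 :=
      mul_nonneg (by linarith [neg_abs_le (Q i j)]) (sq_nonneg _)
    have h6 : 0 ≤ (|Q i j| - Q i j) * (x i - x j)^2 :=
      mul_nonneg (by linarith [le_abs_self (Q i j)]) (sq_nonneg _)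
    nlinarith [h5, h6]
  calc (0:ℝ) ≤ ∑ i, (Q i i * x i ^ 2 - ∑ j ∈ Finset.univ \ {i}, |Q i j| * x i ^ 2) := by
        refine Finset.sum_nonneg fun i _ => ?_
        have h7 : ∑ j ∈ Finset.univ \ {i}, |Q i j| * x i ^ 2
            = (∑ j ∈ Finset.univ \ {i}, |Q i j|) * x i ^ 2 := by rw [Finset.sum_mul]
        rw [h7]
        have := hdd i
        nlinarith [sq_nonneg (x i)]
    _ = (∑ i, Q i i * x i ^ 2)
        - ∑ i, ∑ j ∈ Finset.univ \ {i}, |Q i j| * ((x i)^2 + (x j)^2) / 2 := by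
        rw [← hswap, Finset.sum_sub_distrib]
    _ ≤ (∑ i, Q i i * x i ^ 2) + ∑ i, ∑ j ∈ Finset.univ \ {i}, Q i j * (x i * x j) := by
        have h8 : ∀ i : m, -∑ j ∈ Finset.univ \ {i}, |Q i j| * ((x i)^2 + (x j)^2) / 2
            ≤ ∑ j ∈ Finset.univ \ {i}, Q i j * (x i * x j) := by
          intro i
          rw [← Finset.sum_neg_distrib]
          exact Finset.sum_le_sum fun j _ => by linarith [key i j]
        have h9 := Finset.sum_le_sum fun i (_ : i ∈ Finset.univ) => h8 i
        rw [Finset.sum_neg_distrib] at h9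
        linarith
    _ = x ⬝ᵥ Q.mulVec x := by rw [h2, Finset.sum_add_distrib]

end pctl_aux

private lemma pctl_LDL {n : ℕ}
    (Ar Ai : Matrix (Fin n) (Fin n) ℝ) (Pr Pi : Fin n → ℝ) :
    (fromCols (fromBlocks 1 0 0 1)
        (fromRows (-(diagonal Pr)) (-(diagonal Pi)))
        : Matrix (Fin n ⊕ Fin n) ((Fin n ⊕ Fin n) ⊕ Fin n) ℝ)ᵀ *
      diagonal (Sum.elim (fun k => Ar k k) fun k => Ai k k) *
      fromCols (fromBlocks 1 0 0 1) (fromRows (-(diagonal Pr)) (-(diagonal Pi)))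
    = fromBlocks
        (fromBlocks (diagonal fun k => Ar k k) 0 0 (diagonal fun k => Ai k k))
        (fromRows (diagonal fun k => -(Ar k k * Pr k)) (diagonal fun k => -(Ai k k * Pi k)))
        (fromCols (diagonal fun k => -(Ar k k * Pr k)) (diagonal fun k => -(Ai k k * Pi k)))
        (diagonal fun k => Ar k k * Pr k ^ 2 + Ai k k * Pi k ^ 2) := by
  ext p q
  rw [Matrix.mul_assoc, Matrix.mul_apply]
  rcases p with (pk|pk)|pk <;> rcases q with (qk|qk)|qk <;>
    simp [Fintype.sum_sum_type, Matrix.transpose_apply, Matrix.diagonal_mul,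
      Matrix.fromCols_apply_inl, Matrix.fromCols_apply_inr,
      Matrix.fromRows_apply_inl, Matrix.fromRows_apply_inr,
      Matrix.fromBlocks_apply₁₁, Matrix.fromBlocks_apply₁₂,
      Matrix.fromBlocks_apply₂₁, Matrix.fromBlocks_apply₂₂,
      Matrix.one_apply, Matrix.diagonal_apply, Matrix.neg_apply,
      mul_ite, ite_mul, Finset.sum_ite_eq, Finset.sum_ite_eq'] <;>
    rcases eq_or_ne pk qk with h|h <;>
    first | (subst h; simp; try ring) | simp [h, h.symm]

private lemma pctl_quad {n : ℕ}
    (Ar Ai : Matrix (Fin n) (Fin n) ℝ) (Pr Pi er ei ee : Fin n → ℝ) :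
    Sum.elim (Sum.elim er ei) ee ⬝ᵥ
      ((fromCols (fromBlocks 1 0 0 1)
          (fromRows (-(diagonal Pr)) (-(diagonal Pi)))
          : Matrix (Fin n ⊕ Fin n) ((Fin n ⊕ Fin n) ⊕ Fin n) ℝ)ᵀ *
        diagonal (Sum.elim (fun k => Ar k k) fun k => Ai k k) *
        fromCols (fromBlocks 1 0 0 1)
          (fromRows (-(diagonal Pr)) (-(diagonal Pi)))).mulVec
        (Sum.elim (Sum.elim er ei) ee)
    = (∑ k, Ar k k * (er k - Pr k * ee k) ^ 2) +
        ∑ k, Ai k k * (ei k - Pi k * ee k) ^ 2 := by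
  set L : Matrix (Fin n ⊕ Fin n) ((Fin n ⊕ Fin n) ⊕ Fin n) ℝ :=
    fromCols (fromBlocks 1 0 0 1) (fromRows (-(diagonal Pr)) (-(diagonal Pi))) with hLdef
  set x := Sum.elim (Sum.elim er ei) ee with hxdef
  rw [Matrix.mul_assoc, ← Matrix.mulVec_mulVec, dotProduct_mulVec,
    Matrix.vecMul_transpose, ← Matrix.mulVec_mulVec]
  have hy : L.mulVec x = Sum.elim (fun k => er k - Pr k * ee k)
      (fun k => ei k - Pi k * ee k) := by
    funext a
    cases a with
    | inl k =>
        simp [hLdef, hxdef, Matrix.mulVec, dotProduct, Fintype.sum_sum_type,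
          Matrix.fromCols_apply_inl, Matrix.fromCols_apply_inr,
          Matrix.fromRows_apply_inl, Matrix.fromRows_apply_inr,
          Matrix.fromBlocks_apply₁₁, Matrix.fromBlocks_apply₁₂,
          Matrix.one_apply, Matrix.diagonal_apply, Matrix.neg_apply,
          mul_ite, ite_mul, Finset.sum_ite_eq, Finset.sum_ite_eq', sub_eq_add_neg]
    | inr k =>
        simp [hLdef, hxdef, Matrix.mulVec, dotProduct, Fintype.sum_sum_type,
          Matrix.fromCols_apply_inl, Matrix.fromCols_apply_inr,
          Matrix.fromRows_apply_inl, Matrix.fromRows_apply_inr,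
          Matrix.fromBlocks_apply₂₁, Matrix.fromBlocks_apply₂₂,
          Matrix.one_apply, Matrix.diagonal_apply, Matrix.neg_apply,
          mul_ite, ite_mul, Finset.sum_ite_eq, Finset.sum_ite_eq', sub_eq_add_neg]
  rw [hy]
  simp only [dotProduct, Matrix.mulVec_diagonal, Fintype.sum_sum_type,
    Sum.elim_inl, Sum.elim_inr]
  congr 1 <;> exact Finset.sum_congr rfl fun k _ => by ring

/-- for the PCTL algorithm applied to the 3T system with diagonal
interpolation `P = [Pr; Pi; I]`, `(Pα)_{kk} = −Σ_j bα_{kj} dα_j`, the weak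
approximation inequality `‖e_F − P_FC e_C‖_{0,F}² ≤ β‖e‖_A²` holds with
`β = max_k m_k` (the explicit row quantities); in particular it suffices that
`Q := β'A − LᵀD_F L` be weakly diagonally dominant with nonnegative diagonal. -/
theorem pctl_weak_approximation {n : ℕ}
    (Ar Ai Ae : Matrix (Fin n) (Fin n) ℝ) (dr di : Fin n → ℝ)
    (hArM : (∀ k, 0 < Ar k k) ∧ (∀ k j, k ≠ j → Ar k j ≤ 0) ∧ ∀ k j, 0 ≤ Ar⁻¹ k j)
    (hAiM : (∀ k, 0 < Ai k k) ∧ (∀ k j, k ≠ j → Ai k j ≤ 0) ∧ ∀ k j, 0 ≤ Ai⁻¹ k j)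
    (hAeM : (∀ k, 0 < Ae k k) ∧ (∀ k j, k ≠ j → Ae k j ≤ 0) ∧ ∀ k j, 0 ≤ Ae⁻¹ k j)
    (hArU : IsUnit Ar) (hAiU : IsUnit Ai)
    (hdr : ∀ k, dr k < 0) (hdi : ∀ k, di k < 0)
    (A : Matrix ((Fin n ⊕ Fin n) ⊕ Fin n) ((Fin n ⊕ Fin n) ⊕ Fin n) ℝ)
    (hAdef : A = Matrix.fromBlocks (Matrix.fromBlocks Ar 0 0 Ai)
      (Matrix.fromRows (Matrix.diagonal dr)ᵀ (Matrix.diagonal di)ᵀ)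
      (Matrix.fromCols (Matrix.diagonal dr) (Matrix.diagonal di)) Ae)
    (hApd : A.PosDef)
    (hdd : ∀ k, ∑ j ∈ Finset.univ \ {k}, |A k j| < A k k)
    -- the interpolation weights `Pα k = −Σ_j bα_{kj} dα_j`
    (Pr Pi : Fin n → ℝ)
    (hPr : ∀ k, Pr k = -∑ j, Ar⁻¹ k j * dr j)
    (hPi : ∀ k, Pi k = -∑ j, Ai⁻¹ k j * di j)
    -- the augmented row sums of `A`
    (sr si se : Fin n → ℝ)
    (hsr : ∀ k, sr k = (∑ j, Ar k j) + dr k)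
    (hsi : ∀ k, si k = (∑ j, Ai k j) + di k)
    (hse : ∀ k, se k = dr k + di k + ∑ j, Ae k j)
    -- the explicit row bounds `m_k`
    (mr mi me : Fin n → ℝ)
    (hmr : ∀ k, mr k = max (Ar k k * (1 + ∑ j, Ar⁻¹ k j * dr j) / sr k)
      (Ar k k * (1 - ∑ j, Ar⁻¹ k j * dr j) / (sr k - 2 * dr k)))
    (hmi : ∀ k, mi k = max (Ai k k * (1 + ∑ j, Ai⁻¹ k j * di j) / si k)
      (Ai k k * (1 - ∑ j, Ai⁻¹ k j * di j) / (si k - 2 * di k)))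
    (hme : ∀ k, me k = max (max
      ((Ar k k * ((∑ j, Ar⁻¹ k j * dr j) ^ 2 - ∑ j, Ar⁻¹ k j * dr j) +
        Ai k k * ((∑ j, Ai⁻¹ k j * di j) ^ 2 - ∑ j, Ai⁻¹ k j * di j)) /
          (se k - 2 * dr k - 2 * di k))
      ((Ar k k * ((∑ j, Ar⁻¹ k j * dr j) ^ 2 + ∑ j, Ar⁻¹ k j * dr j) +
        Ai k k * ((∑ j, Ai⁻¹ k j * di j) ^ 2 - ∑ j, Ai⁻¹ k j * di j)) /
          (se k - 2 * di k)))
      ((Ar k k * ((∑ j, Ar⁻¹ k j * dr j) ^ 2 - ∑ j, Ar⁻¹ k j * dr j) +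
        Ai k k * ((∑ j, Ai⁻¹ k j * di j) ^ 2 + ∑ j, Ai⁻¹ k j * di j)) /
          (se k - 2 * dr k)))
    -- `β` is the maximum of the `m_k` over all rows
    (β : ℝ)
    (hβ : IsGreatest {x : ℝ | ∃ k, x = mr k ∨ x = mi k ∨ x = me k} β) :
    -- the weak approximation property holds with this `β`
    (∀ er ei ee : Fin n → ℝ,
      (∑ k, Ar k k * (er k - Pr k * ee k) ^ 2) +
        (∑ k, Ai k k * (ei k - Pi k * ee k) ^ 2) ≤
        β * (Sum.elim (Sum.elim er ei) ee ⬝ᵥ A.mulVec (Sum.elim (Sum.elim er ei) ee))) ∧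
    -- in particular, for any `β'`, weak diagonal dominance (with nonnegative
    -- diagonal) of `Q := β'A − LᵀD_F L` suffices for the inequality with `β'`
    (∀ β' : ℝ,
      (let L : Matrix (Fin n ⊕ Fin n) ((Fin n ⊕ Fin n) ⊕ Fin n) ℝ :=
        Matrix.fromCols (Matrix.fromBlocks 1 0 0 1)
          (Matrix.fromRows (-(Matrix.diagonal Pr)) (-(Matrix.diagonal Pi)));
      let DF : Matrix (Fin n ⊕ Fin n) (Fin n ⊕ Fin n) ℝ :=
        Matrix.diagonal (Sum.elim (fun k => Ar k k) fun k => Ai k k);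
      let Q : Matrix ((Fin n ⊕ Fin n) ⊕ Fin n) ((Fin n ⊕ Fin n) ⊕ Fin n) ℝ :=
        β' • A - Lᵀ * DF * L;
      (∀ k, 0 ≤ Q k k) ∧ ∀ k, ∑ j ∈ Finset.univ \ {k}, |Q k j| ≤ Q k k) →
      ∀ er ei ee : Fin n → ℝ,
        (∑ k, Ar k k * (er k - Pr k * ee k) ^ 2) +
          (∑ k, Ai k k * (ei k - Pi k * ee k) ^ 2) ≤
          β' * (Sum.elim (Sum.elim er ei) ee ⬝ᵥ A.mulVec (Sum.elim (Sum.elim er ei) ee))) := by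
  obtain ⟨hArD, hArOff, hBr⟩ := hArM
  obtain ⟨hAiD, hAiOff, hBi⟩ := hAiM
  obtain ⟨hAeD, hAeOff, hBe⟩ := hAeM
  have hAdef' : A = fromBlocks (fromBlocks Ar 0 0 Ai)
      (fromRows (diagonal dr) (diagonal di))
      (fromCols (diagonal dr) (diagonal di)) Ae := by
    rw [hAdef, Matrix.diagonal_transpose, Matrix.diagonal_transpose]
  have hAsym : ∀ p q, A q p = A p q := by
    intro p q
    have h2 : Aᴴ p q = A p q := by rw [hApd.1]
    simpa [Matrix.conjTranspose_apply] using h2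
  -- consequences of strict diagonal dominance of A
  have habsrow : ∀ (M : Matrix (Fin n) (Fin n) ℝ), (∀ a, 0 < M a a) →
      (∀ a b, a ≠ b → M a b ≤ 0) → ∀ k, ∑ j, |M k j| = 2 * M k k - ∑ j, M k j := by
    intro M hMd hMo k
    have h1 : ∀ j, |M k j| = (if k = j then 2 * M k k else 0) - M k j := by
      intro j
      by_cases hj : k = j
      · subst hj; rw [if_pos rfl, abs_of_pos (hMd k)]; ring
      · rw [if_neg hj, abs_of_nonpos (hMo k j hj), zero_sub]
    rw [Finset.sum_congr rfl fun j _ => h1 j, Finset.sum_sub_distrib, Finset.sum_ite_eq]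
    simp
  have hRr : ∀ k, -dr k < ∑ j, Ar k j := by
    intro k
    have h := hdd (Sum.inl (Sum.inl k))
    rw [sum_sdiff_singleton_eq, hAdef'] at h
    simp only [Fintype.sum_sum_type, Matrix.fromBlocks_apply₁₁, Matrix.fromBlocks_apply₁₂,
      Matrix.fromRows_apply_inl, Matrix.zero_apply, abs_zero, Finset.sum_const_zero,
      Matrix.diagonal_apply, apply_ite abs, Finset.sum_ite_eq, Finset.mem_univ,
      if_true, add_zero] at h
    rw [habsrow Ar hArD hArOff k, abs_of_neg (hdr k), abs_of_pos (hArD k)] at h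
    linarith
  have hRi : ∀ k, -di k < ∑ j, Ai k j := by
    intro k
    have h := hdd (Sum.inl (Sum.inr k))
    rw [sum_sdiff_singleton_eq, hAdef'] at h
    simp only [Fintype.sum_sum_type, Matrix.fromBlocks_apply₁₁, Matrix.fromBlocks_apply₁₂,
      Matrix.fromBlocks_apply₂₁, Matrix.fromBlocks_apply₂₂,
      Matrix.fromRows_apply_inr, Matrix.zero_apply, abs_zero, Finset.sum_const_zero,
      Matrix.diagonal_apply, apply_ite abs, Finset.sum_ite_eq, Finset.mem_univ,
      if_true, zero_add] at h
    rw [habsrow Ai hAiD hAiOff k, abs_of_neg (hdi k), abs_of_pos (hAiD k)] at h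
    linarith
  have hRe : ∀ k, -dr k - di k < ∑ j, Ae k j := by
    intro k
    have h := hdd (Sum.inr k)
    rw [sum_sdiff_singleton_eq, hAdef'] at h
    simp only [Fintype.sum_sum_type, Matrix.fromBlocks_apply₁₁, Matrix.fromBlocks_apply₁₂, Matrix.fromBlocks_apply₂₁,
      Matrix.fromBlocks_apply₂₂, Matrix.fromCols_apply_inl, Matrix.fromCols_apply_inr,
      Matrix.diagonal_apply, apply_ite abs, abs_zero, Finset.sum_ite_eq, Finset.mem_univ,
      if_true] at h
    rw [habsrow Ae hAeD hAeOff k, abs_of_neg (hdr k), abs_of_neg (hdi k),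
      abs_of_pos (hAeD k)] at h
    linarith
  -- interpolation weights lie in [0,1]
  have hBrAr : Ar⁻¹ * Ar = 1 :=
    Matrix.nonsing_inv_mul Ar ((Matrix.isUnit_iff_isUnit_det Ar).mp hArU)
  have hBiAi : Ai⁻¹ * Ai = 1 :=
    Matrix.nonsing_inv_mul Ai ((Matrix.isUnit_iff_isUnit_det Ai).mp hAiU)
  have hrowinv : ∀ (M : Matrix (Fin n) (Fin n) ℝ), M⁻¹ * M = 1 →
      ∀ k, ∑ j, M⁻¹ k j * (∑ l, M j l) = 1 := by
    intro M hMM k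
    have h2 : ∑ j, M⁻¹ k j * (∑ l, M j l) = ∑ l, (M⁻¹ * M) k l := by
      simp only [Finset.mul_sum]
      rw [Finset.sum_comm]
      exact Finset.sum_congr rfl fun l _ => (Matrix.mul_apply).symm
    rw [h2, hMM]
    simp [Matrix.one_apply]
  have hPr1 : ∀ k, Pr k ≤ 1 := by
    intro k
    have h1 : ∑ j, Ar⁻¹ k j * ((∑ l, Ar j l) + dr j) = 1 - Pr k := by
      have h3 : ∀ j, Ar⁻¹ k j * ((∑ l, Ar j l) + dr j)
          = Ar⁻¹ k j * (∑ l, Ar j l) + Ar⁻¹ k j * dr j := fun j => by ring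
      rw [Finset.sum_congr rfl fun j _ => h3 j, Finset.sum_add_distrib,
        hrowinv Ar hBrAr k, hPr k]
      ring
    have h2 : 0 ≤ ∑ j, Ar⁻¹ k j * ((∑ l, Ar j l) + dr j) :=
      Finset.sum_nonneg fun j _ => mul_nonneg (hBr k j) (by linarith [hRr j])
    linarith
  have hPi1 : ∀ k, Pi k ≤ 1 := by
    intro k
    have h1 : ∑ j, Ai⁻¹ k j * ((∑ l, Ai j l) + di j) = 1 - Pi k := by
      have h3 : ∀ j, Ai⁻¹ k j * ((∑ l, Ai j l) + di j)
          = Ai⁻¹ k j * (∑ l, Ai j l) + Ai⁻¹ k j * di j := fun j => by ring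
      rw [Finset.sum_congr rfl fun j _ => h3 j, Finset.sum_add_distrib,
        hrowinv Ai hBiAi k, hPi k]
      ring
    have h2 : 0 ≤ ∑ j, Ai⁻¹ k j * ((∑ l, Ai j l) + di j) :=
      Finset.sum_nonneg fun j _ => mul_nonneg (hBi k j) (by linarith [hRi j])
    linarith
  have hPr0 : ∀ k, 0 ≤ Pr k := by
    intro k
    rw [hPr k, ← Finset.sum_neg_distrib]
    exact Finset.sum_nonneg fun j _ => by nlinarith [hBr k j, hdr j]
  have hPi0 : ∀ k, 0 ≤ Pi k := by
    intro k
    rw [hPi k, ← Finset.sum_neg_distrib]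
    exact Finset.sum_nonneg fun j _ => by nlinarith [hBi k j, hdi j]
  have hSr : ∀ k, (∑ j, Ar⁻¹ k j * dr j) = -Pr k := fun k => by rw [hPr k]; ring
  have hSi : ∀ k, (∑ j, Ai⁻¹ k j * di j) = -Pi k := fun k => by rw [hPi k]; ring
  -- bounds extracted from β = max m_k
  have q2 : ∀ k, 0 < ((∑ j, Ar k j) + dr k) - 2 * dr k := fun k => by
    have := hRr k; have := hdr k; linarith
  have q4 : ∀ k, 0 < ((∑ j, Ai k j) + di k) - 2 * di k := fun k => by
    have := hRi k; have := hdi k; linarith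
  have q5 : ∀ k, 0 < dr k + di k + ∑ j, Ae k j := fun k => by
    have := hRe k; linarith
  have b1r : ∀ k, Ar k k * (1 - Pr k) ≤ β * ((∑ j, Ar k j) + dr k) := by
    intro k
    have h := hβ.2 ⟨k, Or.inl rfl⟩
    rw [hmr k, hSr k, hsr k] at h
    have h2 := le_trans (le_max_left _ _) h
    rw [div_le_iff₀ (by linarith [hRr k])] at h2
    linarith
  have b2r : ∀ k, Ar k k * (1 + Pr k) ≤ β * (((∑ j, Ar k j) + dr k) - 2 * dr k) := by
    intro k
    have h := hβ.2 ⟨k, Or.inl rfl⟩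
    rw [hmr k, hSr k, hsr k] at h
    have h2 := le_trans (le_max_right _ _) h
    rw [div_le_iff₀ (q2 k)] at h2
    linarith
  have b1i : ∀ k, Ai k k * (1 - Pi k) ≤ β * ((∑ j, Ai k j) + di k) := by
    intro k
    have h := hβ.2 ⟨k, Or.inr (Or.inl rfl)⟩
    rw [hmi k, hSi k, hsi k] at h
    have h2 := le_trans (le_max_left _ _) h
    rw [div_le_iff₀ (by linarith [hRi k])] at h2
    linarith
  have b2i : ∀ k, Ai k k * (1 + Pi k) ≤ β * (((∑ j, Ai k j) + di k) - 2 * di k) := by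
    intro k
    have h := hβ.2 ⟨k, Or.inr (Or.inl rfl)⟩
    rw [hmi k, hSi k, hsi k] at h
    have h2 := le_trans (le_max_right _ _) h
    rw [div_le_iff₀ (q4 k)] at h2
    linarith
  have be1 : ∀ k, Ar k k * (Pr k ^ 2 + Pr k) + Ai k k * (Pi k ^ 2 + Pi k)
      ≤ β * ((dr k + di k + ∑ j, Ae k j) - 2 * dr k - 2 * di k) := by
    intro k
    have h := hβ.2 ⟨k, Or.inr (Or.inr rfl)⟩
    rw [hme k, hSr k, hSi k, hse k] at h
    have h2 := le_trans (le_trans (le_max_left _ _) (le_max_left _ _)) h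
    rw [div_le_iff₀ (by have := q5 k; have := hdr k; have := hdi k; linarith)] at h2
    nlinarith [h2]
  have be2 : ∀ k, Ar k k * (Pr k ^ 2 - Pr k) + Ai k k * (Pi k ^ 2 + Pi k)
      ≤ β * ((dr k + di k + ∑ j, Ae k j) - 2 * di k) := by
    intro k
    have h := hβ.2 ⟨k, Or.inr (Or.inr rfl)⟩
    rw [hme k, hSr k, hSi k, hse k] at h
    have h2 := le_trans (le_trans (le_max_right _ _) (le_max_left _ _)) h
    rw [div_le_iff₀ (by have := q5 k; have := hdi k; linarith)] at h2
    nlinarith [h2]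
  have be3 : ∀ k, Ar k k * (Pr k ^ 2 + Pr k) + Ai k k * (Pi k ^ 2 - Pi k)
      ≤ β * ((dr k + di k + ∑ j, Ae k j) - 2 * dr k) := by
    intro k
    have h := hβ.2 ⟨k, Or.inr (Or.inr rfl)⟩
    rw [hme k, hSr k, hSi k, hse k] at h
    have h2 := le_trans (le_max_right _ _) h
    rw [div_le_iff₀ (by have := q5 k; have := hdr k; linarith)] at h2
    nlinarith [h2]
  have hβ0 : ∀ _ : Fin n, 0 ≤ β := by
    intro k
    by_contra hc
    push_neg at hc
    have h1 : β * (((∑ j, Ar k j) + dr k) - 2 * dr k) < 0 :=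
      mul_neg_of_neg_of_pos hc (q2 k)
    nlinarith [hArD k, hPr0 k, b2r k]
  have be4 : ∀ k, Ar k k * (Pr k ^ 2 - Pr k) + Ai k k * (Pi k ^ 2 - Pi k)
      ≤ β * (dr k + di k + ∑ j, Ae k j) := by
    intro k
    have h1 : Pr k ^ 2 ≤ Pr k := by nlinarith [hPr0 k, hPr1 k]
    have h2 : Pi k ^ 2 ≤ Pi k := by nlinarith [hPi0 k, hPi1 k]
    have h3 : 0 ≤ β * (dr k + di k + ∑ j, Ae k j) :=
      mul_nonneg (hβ0 k) (le_of_lt (q5 k))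
    nlinarith [mul_nonneg (le_of_lt (hArD k)) (sub_nonneg.mpr h1),
      mul_nonneg (le_of_lt (hAiD k)) (sub_nonneg.mpr h2)]
  -- helper computations for absolute row sums of Q
  have habs2 : ∀ (M : Matrix (Fin n) (Fin n) ℝ), (∀ a b, a ≠ b → M a b ≤ 0) →
      ∀ (t : ℝ) (k : Fin n),
      ∑ j, |β * M k j - (if k = j then t else 0)|
        = |β * M k k - t| + β * (M k k - ∑ j, M k j) := by
    intro M hMo t k
    have h1 : ∀ j, |β * M k j - (if k = j then t else 0)|
        = (if k = j then |β * M k k - t| + β * M k j else 0) - β * M k j := by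
      intro j
      by_cases hj : k = j
      · subst hj; rw [if_pos rfl, if_pos rfl]; ring
      · rw [if_neg hj, if_neg hj, sub_zero,
          abs_of_nonpos (by nlinarith [hβ0 k, hMo k j hj] : β * M k j ≤ 0), zero_sub]
    rw [Finset.sum_congr rfl fun j _ => h1 j, Finset.sum_sub_distrib, Finset.sum_ite_eq]
    rw [← Finset.mul_sum]
    simp only [Finset.mem_univ, if_true]
    ring
  have hdiagabs : ∀ (d : Fin n → ℝ) (t : ℝ) (k : Fin n),
      ∑ j, |β * (if k = j then d k else 0) - (if k = j then t else 0)|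
        = |β * d k - t| := by
    intro d t k
    have h1 : ∀ j, |β * (if k = j then d k else 0) - (if k = j then t else 0)|
        = if k = j then |β * d k - t| else 0 := by
      intro j; by_cases hj : k = j <;> simp [hj]
    rw [Finset.sum_congr rfl fun j _ => h1 j, Finset.sum_ite_eq]
    simp
  -- diagonal dominance of Q for β
  have hddQ : ∀ p, ∑ q ∈ Finset.univ \ {p},
      |(β • A - (fromCols (fromBlocks 1 0 0 1)
          (fromRows (-(diagonal Pr)) (-(diagonal Pi)))
          : Matrix (Fin n ⊕ Fin n) ((Fin n ⊕ Fin n) ⊕ Fin n) ℝ)ᵀ *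
        diagonal (Sum.elim (fun k => Ar k k) fun k => Ai k k) *
        fromCols (fromBlocks 1 0 0 1)
          (fromRows (-(diagonal Pr)) (-(diagonal Pi)))
        : Matrix ((Fin n ⊕ Fin n) ⊕ Fin n) ((Fin n ⊕ Fin n) ⊕ Fin n) ℝ) p q|
      ≤ (β • A - (fromCols (fromBlocks 1 0 0 1)
          (fromRows (-(diagonal Pr)) (-(diagonal Pi)))
          : Matrix (Fin n ⊕ Fin n) ((Fin n ⊕ Fin n) ⊕ Fin n) ℝ)ᵀ *
        diagonal (Sum.elim (fun k => Ar k k) fun k => Ai k k) *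
        fromCols (fromBlocks 1 0 0 1)
          (fromRows (-(diagonal Pr)) (-(diagonal Pi)))
        : Matrix ((Fin n ⊕ Fin n) ⊕ Fin n) ((Fin n ⊕ Fin n) ⊕ Fin n) ℝ) p p := by
    intro p
    rw [sum_sdiff_singleton_eq, pctl_LDL Ar Ai Pr Pi, hAdef']
    rcases p with (k|k)|k
    · simp only [Fintype.sum_sum_type, Matrix.sub_apply, Matrix.smul_apply, smul_eq_mul,
        Matrix.fromBlocks_apply₁₁, Matrix.fromBlocks_apply₁₂, Matrix.fromBlocks_apply₂₁,
        Matrix.fromBlocks_apply₂₂, Matrix.fromRows_apply_inl, Matrix.fromRows_apply_inr,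
        Matrix.zero_apply, Matrix.diagonal_apply, mul_zero, sub_zero, abs_zero,
        Finset.sum_const_zero, add_zero, eq_self_iff_true, if_true, sub_self]
      rw [habs2 Ar hArOff (Ar k k) k, hdiagabs dr (-(Ar k k * Pr k)) k, sub_neg_eq_add]
      have hX : |β * dr k + Ar k k * Pr k| ≤ β * (∑ j, Ar k j) - Ar k k := by
        rw [abs_le]
        constructor
        · linarith [b1r k]
        · linarith [b2r k]
      linarith [hX]
    · simp only [Fintype.sum_sum_type, Matrix.sub_apply, Matrix.smul_apply, smul_eq_mul,
        Matrix.fromBlocks_apply₁₁, Matrix.fromBlocks_apply₁₂, Matrix.fromBlocks_apply₂₁,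
        Matrix.fromBlocks_apply₂₂, Matrix.fromRows_apply_inl, Matrix.fromRows_apply_inr,
        Matrix.zero_apply, Matrix.diagonal_apply, mul_zero, sub_zero, abs_zero,
        Finset.sum_const_zero, zero_add, eq_self_iff_true, if_true, sub_self]
      rw [habs2 Ai hAiOff (Ai k k) k, hdiagabs di (-(Ai k k * Pi k)) k, sub_neg_eq_add]
      have hX : |β * di k + Ai k k * Pi k| ≤ β * (∑ j, Ai k j) - Ai k k := by
        rw [abs_le]
        constructor
        · linarith [b1i k]
        · linarith [b2i k]
      linarith [hX]
    · simp only [Fintype.sum_sum_type, Matrix.sub_apply, Matrix.smul_apply, smul_eq_mul,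
        Matrix.fromBlocks_apply₁₁, Matrix.fromBlocks_apply₁₂, Matrix.fromBlocks_apply₂₁,
        Matrix.fromBlocks_apply₂₂, Matrix.fromCols_apply_inl, Matrix.fromCols_apply_inr,
        Matrix.diagonal_apply, eq_self_iff_true, if_true]
      rw [habs2 Ae hAeOff (Ar k k * Pr k ^ 2 + Ai k k * Pi k ^ 2) k,
        hdiagabs dr (-(Ar k k * Pr k)) k, hdiagabs di (-(Ai k k * Pi k)) k,
        sub_neg_eq_add, sub_neg_eq_add]
      rcases abs_cases (β * dr k + Ar k k * Pr k) with ⟨hx1, _⟩ | ⟨hx1, _⟩ <;>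
        rcases abs_cases (β * di k + Ai k k * Pi k) with ⟨hy1, _⟩ | ⟨hy1, _⟩ <;>
        rw [hx1, hy1] <;>
        linarith [be1 k, be2 k, be3 k, be4 k]
  -- the general criterion
  have key : ∀ c : ℝ,
      (∀ p, ∑ q ∈ Finset.univ \ {p},
          |(c • A - (fromCols (fromBlocks 1 0 0 1)
              (fromRows (-(diagonal Pr)) (-(diagonal Pi)))
              : Matrix (Fin n ⊕ Fin n) ((Fin n ⊕ Fin n) ⊕ Fin n) ℝ)ᵀ *
            diagonal (Sum.elim (fun k => Ar k k) fun k => Ai k k) *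
            fromCols (fromBlocks 1 0 0 1)
              (fromRows (-(diagonal Pr)) (-(diagonal Pi)))
            : Matrix ((Fin n ⊕ Fin n) ⊕ Fin n) ((Fin n ⊕ Fin n) ⊕ Fin n) ℝ) p q|
        ≤ (c • A - (fromCols (fromBlocks 1 0 0 1)
              (fromRows (-(diagonal Pr)) (-(diagonal Pi)))
              : Matrix (Fin n ⊕ Fin n) ((Fin n ⊕ Fin n) ⊕ Fin n) ℝ)ᵀ *
            diagonal (Sum.elim (fun k => Ar k k) fun k => Ai k k) *
            fromCols (fromBlocks 1 0 0 1)
              (fromRows (-(diagonal Pr)) (-(diagonal Pi)))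
            : Matrix ((Fin n ⊕ Fin n) ⊕ Fin n) ((Fin n ⊕ Fin n) ⊕ Fin n) ℝ) p p) →
      ∀ er ei ee : Fin n → ℝ,
        (∑ k, Ar k k * (er k - Pr k * ee k) ^ 2) +
          (∑ k, Ai k k * (ei k - Pi k * ee k) ^ 2) ≤
          c * (Sum.elim (Sum.elim er ei) ee ⬝ᵥ
            A.mulVec (Sum.elim (Sum.elim er ei) ee)) := by
    intro c hdd' er ei ee
    set L : Matrix (Fin n ⊕ Fin n) ((Fin n ⊕ Fin n) ⊕ Fin n) ℝ :=
      fromCols (fromBlocks 1 0 0 1)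
        (fromRows (-(diagonal Pr)) (-(diagonal Pi))) with hLdef
    set DF : Matrix (Fin n ⊕ Fin n) (Fin n ⊕ Fin n) ℝ :=
      diagonal (Sum.elim (fun k => Ar k k) fun k => Ai k k) with hDFdef
    set x := Sum.elim (Sum.elim er ei) ee with hxdef
    have hMt : (Lᵀ * DF * L)ᵀ = Lᵀ * DF * L := by
      rw [Matrix.transpose_mul, Matrix.transpose_mul, Matrix.transpose_transpose,
        hDFdef, Matrix.diagonal_transpose, Matrix.mul_assoc]
    have hQsym : ∀ p q, (c • A - Lᵀ * DF * L) q p = (c • A - Lᵀ * DF * L) p q := by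
      intro p q
      have h1 : (Lᵀ * DF * L) q p = (Lᵀ * DF * L) p q := by
        calc (Lᵀ * DF * L) q p = (Lᵀ * DF * L)ᵀ p q := (Matrix.transpose_apply _ _ _).symm
          _ = (Lᵀ * DF * L) p q := by rw [hMt]
      simp [Matrix.sub_apply, Matrix.smul_apply, hAsym p q, h1]
    have hpsd := psd_of_dd (c • A - Lᵀ * DF * L) hQsym hdd' x
    have hsplit : x ⬝ᵥ (c • A - Lᵀ * DF * L).mulVec x
        = c * (x ⬝ᵥ A.mulVec x) - x ⬝ᵥ (Lᵀ * DF * L).mulVec x := by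
      rw [Matrix.sub_mulVec, dotProduct_sub, Matrix.smul_mulVec,
        dotProduct_smul, smul_eq_mul]
    have hquad := pctl_quad Ar Ai Pr Pi er ei ee
    rw [← hLdef, ← hDFdef, ← hxdef] at hquad
    linarith [hpsd, hsplit, hquad]
  exact ⟨fun er ei ee => key β hddQ er ei ee, fun c h er ei ee => key c h.2 er ei ee⟩
end

section
/- If the smoothing property holds with constant α₁ = 1/4 and the weak approximation property holds with constant β ≥ 1/4 for the PCTL two-level method, then the A-norm of the full symmetric two-grid error propagator E = G₂TG₁ satisfies ‖E‖_A = ‖G₂T‖_A² ≤ 1 − 1/(4β). -/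
open Matrix

/-- The `A`-(energy-)norm of the linear operator given by matrix `B`:
`‖B‖_A = sup {‖Bx‖_A : ‖x‖_A = 1}`. -/
noncomputable def aOpNorm {n : ℕ} (A B : Matrix (Fin n) (Fin n) ℝ) : ℝ :=
  sSup {r : ℝ | ∃ x : Fin n → ℝ, x ⬝ᵥ A.mulVec x = 1 ∧
    r = Real.sqrt (B.mulVec x ⬝ᵥ A.mulVec (B.mulVec x))}

section Aux

open scoped Matrix.Norms.L2Operator
open scoped MatrixOrder
set_option maxHeartbeats 1000000

lemma quadBA {n : ℕ} (A B : Matrix (Fin n) (Fin n) ℝ) (x : Fin n → ℝ) :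
    (B *ᵥ x) ⬝ᵥ A *ᵥ (B *ᵥ x) = x ⬝ᵥ (Bᵀ * A * B) *ᵥ x := by
  rw [Matrix.mul_assoc, ← mulVec_mulVec, dotProduct_mulVec x, vecMul_transpose, mulVec_mulVec]

lemma hnorm_aux {n : ℕ} (v : Fin n → ℝ) :
    ‖(WithLp.equiv 2 (Fin n → ℝ)).symm v‖ = Real.sqrt (v ⬝ᵥ v) := by
  rw [EuclideanSpace.norm_eq]
  congr 1
  simp [dotProduct, Real.norm_eq_abs, sq_abs, sq]

lemma hdot_aux {n : ℕ} (A S : Matrix (Fin n) (Fin n) ℝ) (hS : S * S = A) (hSsym : Sᵀ = S)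
    (w : Fin n → ℝ) : w ⬝ᵥ A *ᵥ w = (S *ᵥ w) ⬝ᵥ (S *ᵥ w) := by
  conv_lhs => rw [← hS, ← mulVec_mulVec, dotProduct_mulVec]
  rw [show w ᵥ* S = S *ᵥ w by rw [← hSsym, vecMul_transpose, hSsym]]

lemma aOpNorm_eq_l2 {n : ℕ} (A S B : Matrix (Fin n) (Fin n) ℝ)
    (hS : S * S = A) (hSsym : Sᵀ = S) (hSdet : IsUnit S.det) :
    aOpNorm A B = ‖S * B * S⁻¹‖ := by
  have hS'S : S⁻¹ * S = 1 := nonsing_inv_mul _ hSdet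
  have hSS' : S * S⁻¹ = 1 := mul_nonsing_inv _ hSdet
  set C := S * B * S⁻¹ with hC
  set f := toEuclideanCLM (𝕜 := ℝ) (n := Fin n) C with hf
  have happly : ∀ v : Fin n → ℝ,
      f ((WithLp.equiv 2 (Fin n → ℝ)).symm v) = (WithLp.equiv 2 (Fin n → ℝ)).symm (C *ᵥ v) := by
    intro v; simp [hf]
  have hCS : ∀ x : Fin n → ℝ, C *ᵥ (S *ᵥ x) = S *ᵥ (B *ᵥ x) := by
    intro x
    rw [mulVec_mulVec, hC, Matrix.mul_assoc (S * B) S⁻¹ S, hS'S, mul_one, ← mulVec_mulVec]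
  have hset : {r : ℝ | ∃ x : Fin n → ℝ, x ⬝ᵥ A.mulVec x = 1 ∧
      r = Real.sqrt (B.mulVec x ⬝ᵥ A.mulVec (B.mulVec x))}
      = {r : ℝ | ∃ y : EuclideanSpace ℝ (Fin n), ‖y‖ = 1 ∧ r = ‖f y‖} := by
    ext r; constructor
    · rintro ⟨x, hx1, rfl⟩
      refine ⟨(WithLp.equiv 2 (Fin n → ℝ)).symm (S *ᵥ x), ?_, ?_⟩
      · rw [hnorm_aux, ← hdot_aux A S hS hSsym, hx1, Real.sqrt_one]
      · rw [happly, hnorm_aux, hCS, ← hdot_aux A S hS hSsym]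
    · rintro ⟨y, hy1, rfl⟩
      set v := WithLp.equiv 2 (Fin n → ℝ) y with hv
      have hyv : y = (WithLp.equiv 2 (Fin n → ℝ)).symm v := (Equiv.symm_apply_apply _ _).symm
      have hv1 : v ⬝ᵥ v = 1 := by
        have h0 : 0 ≤ v ⬝ᵥ v := Finset.sum_nonneg fun i _ => mul_self_nonneg _
        have := hy1
        rw [hyv, hnorm_aux] at this
        exact (Real.sqrt_eq_one.mp this)
      have hxS : S *ᵥ (S⁻¹ *ᵥ v) = v := by rw [mulVec_mulVec, hSS', one_mulVec]
      refine ⟨S⁻¹ *ᵥ v, ?_, ?_⟩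
      · rw [hdot_aux A S hS hSsym, hxS, hv1]
      · rw [hyv, happly, hnorm_aux, hdot_aux A S hS hSsym, ← hCS, hxS]
  rw [aOpNorm, hset]
  have hnormC : ‖C‖ = ‖f‖ := rfl
  rcases isEmpty_or_nonempty (Fin n) with h | h
  · have hempty : {r : ℝ | ∃ y : EuclideanSpace ℝ (Fin n), ‖y‖ = 1 ∧ r = ‖f y‖} = ∅ := by
      ext r; simp only [Set.mem_setOf_eq, Set.mem_empty_iff_false, iff_false]
      rintro ⟨y, hy, -⟩
      have : y = 0 := Subsingleton.elim _ _
      rw [this, norm_zero] at hy; norm_num at hy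
    rw [hempty, Real.sSup_empty, hnormC]
    have : f = 0 := Subsingleton.elim _ _
    rw [this, norm_zero]
  · rw [hnormC]
    have hub : ∀ r ∈ {r : ℝ | ∃ y : EuclideanSpace ℝ (Fin n), ‖y‖ = 1 ∧ r = ‖f y‖}, r ≤ ‖f‖ := by
      rintro r ⟨y, hy, rfl⟩
      simpa [hy] using f.le_opNorm y
    set i0 := Classical.arbitrary (Fin n)
    set y₀ : EuclideanSpace ℝ (Fin n) := (WithLp.equiv 2 (Fin n → ℝ)).symm (Pi.single i0 1) with hy₀d
    have hy₀ : ‖y₀‖ = 1 := by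
      rw [hy₀d, hnorm_aux]
      have : (Pi.single i0 (1:ℝ)) ⬝ᵥ (Pi.single i0 1) = 1 := by
        simp [dotProduct, Pi.single_apply]
      rw [this, Real.sqrt_one]
    have hmem : ‖f y₀‖ ∈ {r : ℝ | ∃ y : EuclideanSpace ℝ (Fin n), ‖y‖ = 1 ∧ r = ‖f y‖} :=
      ⟨y₀, hy₀, rfl⟩
    have hbdd : BddAbove {r : ℝ | ∃ y : EuclideanSpace ℝ (Fin n), ‖y‖ = 1 ∧ r = ‖f y‖} :=
      ⟨‖f‖, hub⟩
    have h0 : 0 ≤ sSup {r : ℝ | ∃ y : EuclideanSpace ℝ (Fin n), ‖y‖ = 1 ∧ r = ‖f y‖} :=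
      le_trans (norm_nonneg _) (le_csSup hbdd hmem)
    refine le_antisymm (Real.sSup_le hub (norm_nonneg f)) ?_
    refine f.opNorm_le_bound h0 fun y => ?_
    rcases eq_or_ne y 0 with rfl | hy
    · simp
    · have hny : (0:ℝ) < ‖y‖ := norm_pos_iff.mpr hy
      set u : EuclideanSpace ℝ (Fin n) := ‖y‖⁻¹ • y with hu
      have hu1 : ‖u‖ = 1 := by
        rw [hu, norm_smul, norm_inv, norm_norm, inv_mul_cancel₀ hny.ne']
      have humem : ‖f u‖ ∈ {r : ℝ | ∃ y : EuclideanSpace ℝ (Fin n), ‖y‖ = 1 ∧ r = ‖f y‖} :=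
        ⟨u, hu1, rfl⟩
      have hyu : y = ‖y‖ • u := by
        rw [hu, smul_smul, mul_inv_cancel₀ hny.ne', one_smul]
      have hfy : f y = ‖y‖ • f u := by nth_rewrite 1 [hyu]; exact f.map_smul _ _
      calc ‖f y‖ = ‖y‖ * ‖f u‖ := by rw [hfy, norm_smul, norm_norm]
        _ ≤ ‖y‖ * sSup _ := by
            have := le_csSup hbdd humem
            exact mul_le_mul_of_nonneg_left this hny.le
        _ = sSup _ * ‖y‖ := mul_comm _ _

/-- if the smoothing property holds with `α₁ = 1/4` and the weak
approximation property holds with `β ≥ 1/4`, then the symmetric two-grid error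
propagator `E = G₂TG₁` satisfies `‖E‖_A = ‖G₂T‖_A² ≤ 1 − 1/(4β)`. -/
theorem pctl_two_grid_bound {n m : ℕ} (A M : Matrix (Fin n) (Fin n) ℝ)
    (P : Matrix (Fin n) (Fin m) ℝ) (hA : A.PosDef) (hM : IsUnit M)
    (hP : (Pᵀ * A * P).PosDef) (β : ℝ) (hβ : 1 / 4 ≤ β)
    (hsmooth : ∀ e : Fin n → ℝ,
      ((1 - M⁻¹ * A).mulVec e) ⬝ᵥ A.mulVec ((1 - M⁻¹ * A).mulVec e) ≤
        e ⬝ᵥ A.mulVec e -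
          (1 / 4) * (((Matrix.diagonal fun i => A i i)⁻¹.mulVec (A.mulVec e)) ⬝ᵥ A.mulVec e))
    (happrox : ∀ e : Fin n → ℝ,
      ((1 - P * (Pᵀ * A * P)⁻¹ * Pᵀ * A).mulVec e) ⬝ᵥ
          A.mulVec ((1 - P * (Pᵀ * A * P)⁻¹ * Pᵀ * A).mulVec e) ≤
        β * (((Matrix.diagonal fun i => A i i)⁻¹.mulVec (A.mulVec e)) ⬝ᵥ A.mulVec e)) :
    aOpNorm A ((1 - M⁻¹ * A) * (1 - P * (Pᵀ * A * P)⁻¹ * Pᵀ * A) * (1 - (Mᵀ)⁻¹ * A)) =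
        (aOpNorm A ((1 - M⁻¹ * A) * (1 - P * (Pᵀ * A * P)⁻¹ * Pᵀ * A))) ^ 2 ∧
      aOpNorm A ((1 - M⁻¹ * A) * (1 - P * (Pᵀ * A * P)⁻¹ * Pᵀ * A) * (1 - (Mᵀ)⁻¹ * A)) ≤
        1 - 1 / (4 * β) := by
  set G := (1 : Matrix (Fin n) (Fin n) ℝ) - M⁻¹ * A with hGdef
  set Sc := Pᵀ * A * P with hScdef
  set T := (1 : Matrix (Fin n) (Fin n) ℝ) - P * Sc⁻¹ * Pᵀ * A with hTdef
  set G1 := (1 : Matrix (Fin n) (Fin n) ℝ) - (Mᵀ)⁻¹ * A with hG1def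
  clear_value G Sc T G1
  have hAsym : Aᵀ = A := by rw [← conjTranspose_eq_transpose_of_trivial]; exact hA.1
  have hAdet : IsUnit A.det := isUnit_iff_ne_zero.mpr hA.det_pos.ne'
  have hScdet : IsUnit Sc.det := isUnit_iff_ne_zero.mpr hP.det_pos.ne'
  obtain ⟨S, hSmul, hSsym, hSdet⟩ :
      ∃ S : Matrix (Fin n) (Fin n) ℝ, S * S = A ∧ Sᵀ = S ∧ IsUnit S.det := by
    refine ⟨CFC.sqrt A, CFC.sqrt_mul_sqrt_self A hA.posSemidef.nonneg, ?_, ?_⟩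
    · rw [← conjTranspose_eq_transpose_of_trivial]
      exact (CFC.sqrt_nonneg A).posSemidef.1
    · have hd : (CFC.sqrt A).det * (CFC.sqrt A).det = A.det := by
        rw [← det_mul, CFC.sqrt_mul_sqrt_self A hA.posSemidef.nonneg]
      refine isUnit_iff_ne_zero.mpr fun h => ?_
      rw [h, mul_zero] at hd
      exact hA.det_pos.ne' hd.symm
  have hS'S : S⁻¹ * S = 1 := nonsing_inv_mul _ hSdet
  have hSS' : S * S⁻¹ = 1 := mul_nonsing_inv _ hSdet
  have hAS : A * S⁻¹ = S := by rw [← hSmul, Matrix.mul_assoc, hSS', mul_one]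
  have hSiSi : S⁻¹ * S⁻¹ = A⁻¹ := by rw [← hSmul, Matrix.mul_inv_rev]
  have hAiA : A⁻¹ * A = 1 := nonsing_inv_mul _ hAdet
  have hScsym : Scᵀ = Sc := by
    rw [hScdef]; simp [transpose_mul, hAsym, Matrix.mul_assoc]
  have hSciT : Sc⁻¹ᵀ = Sc⁻¹ := by rw [transpose_nonsing_inv, hScsym]
  have hAT : A * T = Tᵀ * A := by
    rw [hTdef]
    simp only [transpose_sub, transpose_one, transpose_mul, transpose_transpose, hSciT, hAsym]
    noncomm_ring
    simp only [Matrix.mul_assoc]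
  have hTT : T * T = T := by
    have hkey : Sc⁻¹ * Sc = 1 := nonsing_inv_mul _ hScdet
    have hPi : (P * Sc⁻¹ * Pᵀ * A) * (P * Sc⁻¹ * Pᵀ * A) = P * Sc⁻¹ * Pᵀ * A := by
      calc (P * Sc⁻¹ * Pᵀ * A) * (P * Sc⁻¹ * Pᵀ * A)
          = P * ((Sc⁻¹ * (Pᵀ * A * P)) * (Sc⁻¹ * (Pᵀ * A))) := by
            simp only [Matrix.mul_assoc]
        _ = P * Sc⁻¹ * Pᵀ * A := by
            rw [← hScdef, hkey]
            simp only [Matrix.one_mul, Matrix.mul_assoc]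
    have hexp : (1 - P * Sc⁻¹ * Pᵀ * A) * (1 - P * Sc⁻¹ * Pᵀ * A) =
        1 - P * Sc⁻¹ * Pᵀ * A - P * Sc⁻¹ * Pᵀ * A
          + (P * Sc⁻¹ * Pᵀ * A) * (P * Sc⁻¹ * Pᵀ * A) := by noncomm_ring
    rw [hTdef, hexp, hPi]; noncomm_ring
  have hAG : A * G1 = Gᵀ * A := by
    rw [hGdef, hG1def]
    simp only [transpose_sub, transpose_one, transpose_mul, transpose_nonsing_inv, hAsym]
    noncomm_ring
  have key1 : A⁻¹ * (Tᵀ * (Gᵀ * A)) = T * G1 := by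
    have h2 : Tᵀ * (Gᵀ * A) = A * (T * G1) := by
      rw [← hAG, ← Matrix.mul_assoc, ← hAT, Matrix.mul_assoc]
    rw [h2, ← Matrix.mul_assoc, hAiA, one_mul]
  set C := S * (G * T) * S⁻¹ with hCdef
  clear_value C
  have hCH : Cᴴ = S⁻¹ * (Tᵀ * Gᵀ) * S := by
    rw [conjTranspose_eq_transpose_of_trivial, hCdef]
    simp [transpose_mul, transpose_nonsing_inv, hSsym, Matrix.mul_assoc]
  have hE : C * Cᴴ = S * (G * T * G1) * S⁻¹ := by
    rw [hCH]
    have e1 : C * (S⁻¹ * (Tᵀ * Gᵀ) * S) =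
        S * (G * (T * (S⁻¹ * S⁻¹ * (Tᵀ * (Gᵀ * (A * S⁻¹)))))) := by
      rw [hAS, hCdef]; simp only [Matrix.mul_assoc]
    rw [e1, hSiSi,
      show A⁻¹ * (Tᵀ * (Gᵀ * (A * S⁻¹))) = A⁻¹ * (Tᵀ * (Gᵀ * A)) * S⁻¹ from by
        simp only [Matrix.mul_assoc],
      key1, show T * (T * G1 * S⁻¹) = T * T * G1 * S⁻¹ from by
        simp only [Matrix.mul_assoc], hTT]
    simp only [Matrix.mul_assoc]
  have hb1 : aOpNorm A (G * T * G1) = ‖S * (G * T * G1) * S⁻¹‖ :=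
    aOpNorm_eq_l2 A S _ hSmul hSsym hSdet
  have hb2 : aOpNorm A (G * T) = ‖C‖ := by
    rw [hCdef]; exact aOpNorm_eq_l2 A S _ hSmul hSsym hSdet
  have hCC : ‖C * Cᴴ‖ = ‖C‖ * ‖C‖ := by
    calc ‖C * Cᴴ‖ = ‖(Cᴴ)ᴴ * Cᴴ‖ := by rw [conjTranspose_conjTranspose]
      _ = ‖Cᴴ‖ * ‖Cᴴ‖ := l2_opNorm_conjTranspose_mul_self _
      _ = ‖C‖ * ‖C‖ := by rw [l2_opNorm_conjTranspose]
  have part1 : aOpNorm A (G * T * G1) = (aOpNorm A (G * T)) ^ 2 := by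
    rw [hb1, ← hE, hCC, hb2, sq]
  have hβ0 : (0:ℝ) < β := lt_of_lt_of_le (by norm_num) hβ
  have hc0 : (0:ℝ) ≤ 1 - 1 / (4 * β) := by
    have h1 : 1 / (4 * β) ≤ 1 := by
      rw [div_le_one (by linarith)]; linarith
    linarith
  have hTe : ∀ x : Fin n → ℝ, T *ᵥ (T *ᵥ x) = T *ᵥ x := by
    intro x; rw [mulVec_mulVec, hTT]
  have hbound : ∀ x : Fin n → ℝ, x ⬝ᵥ A *ᵥ x = 1 →
      ((G * T) *ᵥ x) ⬝ᵥ A *ᵥ ((G * T) *ᵥ x) ≤ 1 - 1 / (4 * β) := by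
    intro x hx1
    set e := T *ᵥ x with he
    have hsm := hsmooth e
    have hap := happrox e
    have hTee : T *ᵥ e = e := by rw [he]; exact hTe x
    rw [hTee] at hap
    have hq : e ⬝ᵥ A *ᵥ e / β ≤
        ((Matrix.diagonal fun i => A i i)⁻¹ *ᵥ (A *ᵥ e)) ⬝ᵥ A *ᵥ e :=
      (div_le_iff₀ hβ0).mpr (hap.trans_eq (mul_comm β _))
    have h0T : 0 ≤ ((1 - T) *ᵥ x) ⬝ᵥ A *ᵥ ((1 - T) *ᵥ x) := by
      simpa using hA.posSemidef.dotProduct_mulVec_nonneg ((1 - T) *ᵥ x)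
    have h1 : Tᵀ * (A * T) = A * T := by
      rw [hAT, ← Matrix.mul_assoc, ← transpose_mul, hTT, ← hAT]
    have hmat : (1 - T)ᵀ * A * (1 - T) = A - Tᵀ * (A * T) := by
      rw [transpose_sub, transpose_one]
      calc (1 - Tᵀ) * A * (1 - T) = A - Tᵀ * A - A * T + Tᵀ * (A * T) := by noncomm_ring
        _ = A - Tᵀ * (A * T) := by rw [h1, ← hAT]; abel
    have hTle : e ⬝ᵥ A *ᵥ e ≤ 1 := by
      rw [quadBA, hmat, sub_mulVec, dotProduct_sub] at h0T
      have hTq : x ⬝ᵥ (Tᵀ * (A * T)) *ᵥ x = e ⬝ᵥ A *ᵥ e := by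
        rw [he, quadBA, Matrix.mul_assoc]
      rw [hTq, hx1] at h0T; linarith
    have h2 : e ⬝ᵥ A *ᵥ e - (1/4) * (e ⬝ᵥ A *ᵥ e / β) = (e ⬝ᵥ A *ᵥ e) * (1 - 1/(4*β)) := by
      field_simp
    have h3 : (e ⬝ᵥ A *ᵥ e) * (1 - 1/(4*β)) ≤ 1 - 1/(4*β) := mul_le_of_le_one_left hc0 hTle
    have hGe : (G *ᵥ e) ⬝ᵥ A *ᵥ (G *ᵥ e) ≤ 1 - 1 / (4 * β) := by
      have hstep : e ⬝ᵥ A *ᵥ e -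
          (1/4) * (((Matrix.diagonal fun i => A i i)⁻¹ *ᵥ (A *ᵥ e)) ⬝ᵥ A *ᵥ e) ≤
          e ⬝ᵥ A *ᵥ e - (1/4) * (e ⬝ᵥ A *ᵥ e / β) := by linarith
      linarith [hsm, hstep, h2.le, h2.ge, h3]
    rw [← mulVec_mulVec, ← he]
    exact hGe
  have hsup : aOpNorm A (G * T) ≤ Real.sqrt (1 - 1 / (4 * β)) := by
    rw [aOpNorm]
    refine Real.sSup_le ?_ (Real.sqrt_nonneg _)
    rintro r ⟨x, hx1, rfl⟩
    exact Real.sqrt_le_sqrt (hbound x hx1)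
  have h0' : 0 ≤ aOpNorm A (G * T) := by rw [hb2]; exact norm_nonneg _
  refine ⟨part1, ?_⟩
  calc aOpNorm A (G * T * G1) = (aOpNorm A (G * T)) ^ 2 := part1
    _ ≤ (Real.sqrt (1 - 1 / (4 * β))) ^ 2 := pow_le_pow_left₀ h0' hsup 2
    _ = 1 - 1 / (4 * β) := Real.sq_sqrt hc0

end Aux
end
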